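/- arXiv:1201.3513 — 5 statements merged into one kernel-verified Lean document; each statement's English description precedes it below -/
import Mathlib

section
/- There exist n+1 dyadic filtrations A_0, ..., A_n of R^n (each a family of half-open axis-parallel cubes, with generation k consisting of a partition of R^n into cubes of side 2^{-k}, and any two cubes in a filtration disjoint or nested) such that every Euclidean ball B in R^n is contained in some cube Q belonging to one of the filtrations with diam(Q) <= c_n * diam(B), where c_n = 2 * p_n * sqrt(n) and p_n is the smallest odd integer greater than n. -/
open MeasureTheory

/-- An axis-parallel half-open cube in `ℝⁿ`, given by its lower corner `c`
and its side length `s`. -/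
structure Cube (n : ℕ) where
  c : EuclideanSpace ℝ (Fin n)
  s : ℝ

/-- The set of points of a cube: `∏ᵢ [cᵢ, cᵢ + s)`. -/
def Cube.set {n : ℕ} (Q : Cube n) : Set (EuclideanSpace ℝ (Fin n)) :=
  {y | ∀ i, Q.c i ≤ y i ∧ y i < Q.c i + Q.s}

/-- The concentric dilate `tQ` of a cube `Q`. -/
noncomputable def Cube.dilate {n : ℕ} (Q : Cube n) (t : ℝ) : Cube n :=
  ⟨WithLp.toLp 2 (fun i => Q.c i - (t - 1) * Q.s / 2), t * Q.s⟩

/-- A dyadic filtration of `ℝⁿ`: every cube has side length `2^{-k}` for some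
`k ∈ ℤ`, the cubes of each generation `k` partition `ℝⁿ`, and any two cubes
of the family are nested or disjoint. -/
def IsDyadicFiltration {n : ℕ} (F : Set (Cube n)) : Prop :=
  (∀ Q ∈ F, ∃ k : ℤ, Q.s = (2 : ℝ) ^ (-k)) ∧
  (∀ k : ℤ, ∀ x : EuclideanSpace ℝ (Fin n),
    ∃! Q : Cube n, Q ∈ F ∧ Q.s = (2 : ℝ) ^ (-k) ∧ x ∈ Q.set) ∧
  (∀ Q ∈ F, ∀ Q' ∈ F, Q.set ⊆ Q'.set ∨ Q'.set ⊆ Q.set ∨ Q.set ∩ Q'.set = ∅)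

/-- `pn n` is the smallest odd integer strictly greater than `n`. -/
def pn (n : ℕ) : ℕ := if n % 2 = 0 then n + 1 else n + 2

/-- The covering constant `c_n = 2 pₙ √n` of Theorem A. -/
noncomputable def cN (n : ℕ) : ℝ := 2 * pn n * Real.sqrt n

/-- The dyadic (nondoubling) maximal function associated to a family `A` of
cubes: `M f (x) = sup_{x ∈ Q ∈ A} μ(2Q)⁻¹ ∫_Q |f| dμ`. -/
noncomputable def maxFn {n : ℕ} (μ : Measure (EuclideanSpace ℝ (Fin n)))
    (A : Set (Cube n)) (f : EuclideanSpace ℝ (Fin n) → ℝ)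
    (x : EuclideanSpace ℝ (Fin n)) : ENNReal :=
  ⨆ Q ∈ A, ⨆ _ : x ∈ Q.set,
    (μ (Q.dilate 2).set)⁻¹ * ∫⁻ y in Q.set, ENNReal.ofReal |f y| ∂μ

open Classical in
/-- Weights `w_j = χ_{Q_j} / ∑ₖ χ_{Q_k}`. -/
noncomputable def wfun {n J : ℕ} (Q : Fin J → Cube n) (j : Fin J)
    (x : EuclideanSpace ℝ (Fin n)) : ℝ :=
  (if x ∈ (Q j).set then (1 : ℝ) else 0) /
    (∑ i : Fin J, if x ∈ (Q i).set then (1 : ℝ) else 0)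

namespace S6

lemma pn_odd (n : ℕ) : Odd (pn n) := by
  rw [Nat.odd_iff]; unfold pn; rcases Nat.even_or_odd n with h | h
  · rw [Nat.even_iff] at h; simp [h]; omega
  · rw [Nat.odd_iff] at h; simp [h]

lemma lt_pn (n : ℕ) : n < pn n := by unfold pn; split <;> omega

lemma pn_pos (n : ℕ) : 0 < pn n := lt_of_le_of_lt (Nat.zero_le n) (lt_pn n)

instance (n : ℕ) : NeZero (pn n) := ⟨(pn_pos n).ne'⟩

lemma cop2 (n : ℕ) : Nat.Coprime 2 (pn n) := (pn_odd n).coprime_two_left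

noncomputable def tw (n : ℕ) : (ZMod (pn n))ˣ := ZMod.unitOfCoprime 2 (cop2 n)

lemma tw_coe (n : ℕ) : ((tw n : (ZMod (pn n))ˣ) : ZMod (pn n)) = 2 := by
  rw [tw, ZMod.coe_unitOfCoprime]; norm_num

noncomputable def uk (n : ℕ) (k : ℤ) : ℕ := (((tw n) ^ k : (ZMod (pn n))ˣ) : ZMod (pn n)).val

lemma uk_cast (n : ℕ) (k : ℤ) :
    ((uk n k : ℕ) : ZMod (pn n)) = (((tw n) ^ k : (ZMod (pn n))ˣ) : ZMod (pn n)) := by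
  rw [uk, ZMod.natCast_val, ZMod.cast_id]

lemma lemB (n : ℕ) {k k' : ℤ} (h : k ≤ k') :
    (pn n : ℤ) ∣ 2 ^ (k' - k).toNat * (uk n k : ℤ) - (uk n k' : ℤ) := by
  rw [← ZMod.intCast_zmod_eq_zero_iff_dvd]
  push_cast
  rw [uk_cast, uk_cast]
  have h2 : (2 : ZMod (pn n)) = ((tw n : (ZMod (pn n))ˣ) : ZMod (pn n)) := (tw_coe n).symm
  rw [h2, ← Units.val_pow_eq_pow_val, ← Units.val_mul, ← zpow_natCast, ← zpow_add]
  rw [show ((k' - k).toNat : ℤ) + k = k' by omega]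
  ring

lemma lemC (n : ℕ) {a b : ℕ} (ha : a < pn n) (hb : b < pn n) (hab : a ≠ b) (k : ℤ) :
    ¬ ((pn n : ℤ) ∣ ((a : ℤ) - b) * (uk n k : ℤ)) := by
  intro h
  rw [← ZMod.intCast_zmod_eq_zero_iff_dvd] at h
  push_cast at h
  rw [uk_cast] at h
  rw [Units.mul_left_eq_zero, sub_eq_zero] at h
  apply hab
  have := congrArg ZMod.val h
  rwa [ZMod.val_cast_of_lt ha, ZMod.val_cast_of_lt hb] at this


noncomputable def gcube (n : ℕ) (m : ℕ) (k : ℤ) (z : Fin n → ℤ) : Cube n :=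
  ⟨WithLp.toLp 2 (fun i => (2:ℝ)^(-k) * ((z i : ℝ) + (m : ℝ) * (uk n k : ℝ) / (pn n : ℝ))), (2:ℝ)^(-k)⟩

lemma mem_gcube {n : ℕ} (m : ℕ) (k : ℤ) (z : Fin n → ℤ) (x : EuclideanSpace ℝ (Fin n)) :
    x ∈ (gcube n m k z).set ↔ ∀ i,
      (2:ℝ)^(-k) * ((z i : ℝ) + (m : ℝ) * (uk n k : ℝ) / (pn n : ℝ)) ≤ x i ∧
      x i < (2:ℝ)^(-k) * ((z i : ℝ) + 1 + (m : ℝ) * (uk n k : ℝ) / (pn n : ℝ)) := by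
  unfold gcube Cube.set
  simp only [Set.mem_setOf_eq]
  refine forall_congr' fun i => and_congr Iff.rfl ?_
  rw [show (2:ℝ)^(-k) * ((z i : ℝ) + 1 + (m : ℝ) * (uk n k : ℝ) / (pn n : ℝ))
      = (2:ℝ)^(-k) * ((z i : ℝ) + (m : ℝ) * (uk n k : ℝ) / (pn n : ℝ)) + (2:ℝ)^(-k) by ring]

def gridF (n : ℕ) (m : ℕ) : Set (Cube n) := {Q | ∃ k z, Q = gcube n m k z}

lemma nest_aux {n : ℕ} (m : ℕ) {k k' : ℤ} (h : k ≤ k') (z z' : Fin n → ℤ) :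
    (gcube n m k' z').set ⊆ (gcube n m k z).set ∨
      (gcube n m k z).set ∩ (gcube n m k' z').set = ∅ := by
  set p := pn n with hp
  have hp0 : (0:ℝ) < p := by exact_mod_cast pn_pos n
  set d : ℕ := (k' - k).toNat with hdd
  have hd : (d : ℤ) = k' - k := Int.toNat_of_nonneg (by omega)
  obtain ⟨cc, hcc⟩ := lemB n h
  set w : Fin n → ℤ := fun i => z' i - 2 ^ d * z i - (m : ℤ) * cc with hw
  have h2k : (2:ℝ)^(-k) = (2:ℝ)^(-k') * (2:ℝ)^(d:ℕ) := by
    rw [← zpow_natCast, ← zpow_add₀ (two_ne_zero)]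
    congr 1; omega
  have hu' : (uk n k' : ℝ) = 2^(d:ℕ) * (uk n k : ℝ) - (p:ℝ) * (cc:ℝ) := by
    have := congrArg (Int.cast : ℤ → ℝ) hcc
    push_cast at this
    linarith
  have key : ∀ i, (gcube n m k' z').c i = (gcube n m k z).c i + (2:ℝ)^(-k') * (w i : ℝ) := by
    intro i
    show (2:ℝ)^(-k') * ((z' i : ℝ) + (m : ℝ) * (uk n k' : ℝ) / (p : ℝ))
        = (2:ℝ)^(-k) * ((z i : ℝ) + (m : ℝ) * (uk n k : ℝ) / (p : ℝ)) + (2:ℝ)^(-k') * (w i : ℝ)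
    rw [h2k, hu', hw]
    push_cast
    field_simp
    ring
  have hsk : (0:ℝ) < (2:ℝ)^(-k) := by positivity
  have hsk' : (0:ℝ) < (2:ℝ)^(-k') := by positivity
  have hDk : (2:ℝ)^(-k') * ((2:ℕ):ℝ)^(d:ℕ) = (2:ℝ)^(-k) := by rw [h2k]; norm_num
  by_cases hgood : ∀ i, 0 ≤ w i ∧ w i < 2 ^ d
  · left
    intro y hy
    intro i
    obtain ⟨hy1, hy2⟩ := hy i
    obtain ⟨hw1, hw2⟩ := hgood i
    have hw1' : (0:ℝ) ≤ (w i : ℝ) := by exact_mod_cast hw1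
    have hw2' : ((w i : ℝ) + 1) ≤ (2:ℝ)^(d:ℕ) := by exact_mod_cast hw2
    have hkey := key i
    constructor
    · nlinarith
    · show y i < (gcube n m k z).c i + (2:ℝ)^(-k)
      have : (gcube n m k' z').c i + (2:ℝ)^(-k') ≤ (gcube n m k z).c i + (2:ℝ)^(-k) := by
        rw [hkey, ← hDk]
        push_cast
        nlinarith
      calc y i < (gcube n m k' z').c i + (gcube n m k' z').s := hy2
        _ = (gcube n m k' z').c i + (2:ℝ)^(-k') := rfl
        _ ≤ _ := this
  · right
    push_neg at hgood
    obtain ⟨i, hi⟩ := hgood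
    ext y
    simp only [Set.mem_inter_iff, Set.mem_empty_iff_false, iff_false, not_and]
    intro hy hy'
    obtain ⟨hy1, hy2⟩ := hy i
    obtain ⟨hy1', hy2'⟩ := hy' i
    have hkey := key i
    change (gcube n m k z).c i ≤ y i at hy1
    change y i < (gcube n m k z).c i + (2:ℝ)^(-k) at hy2
    change (gcube n m k' z').c i ≤ y i at hy1'
    change y i < (gcube n m k' z').c i + (2:ℝ)^(-k') at hy2'
    rcases lt_or_ge (w i) 0 with hlt | hge
    · have : ((w i : ℝ) + 1) ≤ 0 := by exact_mod_cast hlt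
      nlinarith
    · have hge2 : (2:ℤ)^d ≤ w i := hi hge
      have : ((2:ℝ))^(d:ℕ) ≤ (w i : ℝ) := by exact_mod_cast hge2
      rw [← hDk] at hy2
      push_cast at hy2 this
      nlinarith


lemma floor_mem (s : ℝ) (hs : 0 < s) (a t : ℝ) :
    s * ((⌊a / s - t⌋ : ℝ) + t) ≤ a ∧ a < s * ((⌊a / s - t⌋ : ℝ) + 1 + t) := by
  constructor
  · rw [mul_comm, ← le_div_iff₀ hs]
    linarith [Int.floor_le (a / s - t)]
  · rw [mul_comm, ← div_lt_iff₀ hs]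
    linarith [Int.lt_floor_add_one (a / s - t)]

lemma floor_uniq {s : ℝ} (hs : 0 < s) {a t : ℝ} {z : ℤ}
    (h1 : s * ((z : ℝ) + t) ≤ a) (h2 : a < s * ((z : ℝ) + 1 + t)) : z = ⌊a / s - t⌋ := by
  rw [mul_comm] at h1 h2
  rw [← le_div_iff₀ hs] at h1
  rw [← div_lt_iff₀ hs] at h2
  exact (Int.floor_eq_iff.mpr ⟨by linarith, by linarith⟩).symm

lemma partition (n m : ℕ) (k : ℤ) (x : EuclideanSpace ℝ (Fin n)) :
    ∃! Q : Cube n, Q ∈ gridF n m ∧ Q.s = (2:ℝ)^(-k) ∧ x ∈ Q.set := by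
  have hs : (0:ℝ) < (2:ℝ)^(-k) := by positivity
  refine ⟨gcube n m k (fun i => ⌊x i / (2:ℝ)^(-k) - (m:ℝ) * (uk n k : ℝ) / (pn n : ℝ)⌋),
    ⟨⟨k, _, rfl⟩, rfl, ?_⟩, ?_⟩
  · rw [mem_gcube]
    intro i
    exact floor_mem ((2:ℝ)^(-k)) hs (x i) _
  · rintro Q ⟨⟨k', z', rfl⟩, hQs, hQx⟩
    have hkk : k' = k := by
      have h1 : ((2:ℝ))^(-k') = (2:ℝ)^(-k) := hQs
      have h2 := zpow_right_injective₀ (by norm_num : (0:ℝ) < 2) (by norm_num) h1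
      omega
    subst hkk
    rw [mem_gcube] at hQx
    have hz : z' = fun i => ⌊x i / (2:ℝ)^(-k') - (m:ℝ) * (uk n k' : ℝ) / (pn n : ℝ)⌋ := by
      funext i
      obtain ⟨h1, h2⟩ := hQx i
      exact floor_uniq hs h1 h2
    rw [hz]

lemma coord_dist_le {n : ℕ} (y x : EuclideanSpace ℝ (Fin n)) (i : Fin n) :
    dist (y i) (x i) ≤ dist y x := by
  rw [EuclideanSpace.dist_eq]
  rw [show dist (y i) (x i) = Real.sqrt (dist (y i) (x i) ^ 2) from (Real.sqrt_sq dist_nonneg).symm]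
  apply Real.sqrt_le_sqrt
  exact Finset.single_le_sum (f := fun j => dist (y j) (x j) ^ 2)
    (fun j _ => sq_nonneg _) (Finset.mem_univ i)

lemma covering (n : ℕ) (x : EuclideanSpace ℝ (Fin n)) (r : ℝ) (hr : 0 < r) :
    ∃ m : Fin (n + 1), ∃ Q ∈ gridF n m.val, Metric.ball x r ⊆ Q.set ∧
      Metric.diam Q.set ≤ cN n * (2 * r) := by
  have hp0 : (0:ℝ) < (pn n : ℝ) := by exact_mod_cast pn_pos n
  obtain ⟨K, hK1, hK2⟩ := exists_mem_Ico_zpow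
    (x := 2 * r * (pn n : ℝ)) (y := (2:ℝ)) (by positivity) one_lt_two
  set k : ℤ := -(K + 1) with hk
  set s : ℝ := (2:ℝ)^(-k) with hsdef
  have hs_eq : s = (2:ℝ)^(K + 1) := by rw [hsdef, hk, neg_neg]
  have hs : 0 < s := by rw [hsdef]; positivity
  have hs1 : 2 * r * (pn n : ℝ) < s := by rw [hs_eq]; exact hK2
  have hs2 : s ≤ 4 * r * (pn n : ℝ) := by
    rw [hs_eq, zpow_add₀ (two_ne_zero) K 1]
    have h1 : (2:ℝ)^K ≤ 2 * r * (pn n : ℝ) := hK1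
    norm_num
    nlinarith
  have hgood : ∃ m : Fin (n + 1), ∀ i : Fin n, ¬ ∃ w : ℤ,
      x i - r < s * ((w : ℝ) + ((m : ℕ) : ℝ) * (uk n k : ℝ) / (pn n : ℝ)) ∧
        s * ((w : ℝ) + ((m : ℕ) : ℝ) * (uk n k : ℝ) / (pn n : ℝ)) ≤ x i + r := by
    by_contra hcon
    push_neg at hcon
    choose f hf using hcon
    obtain ⟨m, m', hne, hfe⟩ := Fintype.exists_ne_map_eq_of_card_lt f (by simp)
    obtain ⟨w, hw1, hw2⟩ := hf m
    obtain ⟨w', hw1', hw2'⟩ := hf m'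
    rw [← hfe] at hw1' hw2'
    have hNne : ((pn n : ℤ) * (w - w') + (((m : ℕ) : ℤ) - ((m' : ℕ) : ℤ)) * (uk n k : ℤ)) ≠ 0 := by
      intro h0
      refine lemC n (lt_of_lt_of_le m.isLt (lt_pn n)) (lt_of_lt_of_le m'.isLt (lt_pn n))
        (fun hc => hne (Fin.val_injective hc)) k ⟨w' - w, by linarith⟩
    set N : ℤ := (pn n : ℤ) * (w - w') + (((m : ℕ) : ℤ) - ((m' : ℕ) : ℤ)) * (uk n k : ℤ) with hN
    have habs : (1:ℝ) ≤ |(N : ℝ)| := by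
      have := Int.one_le_abs hNne
      calc (1:ℝ) = ((1:ℤ):ℝ) := by norm_num
        _ ≤ ((|N|:ℤ):ℝ) := by exact_mod_cast this
        _ = |(N:ℝ)| := by push_cast; ring
    have hdiff : s * ((w : ℝ) + ((m : ℕ) : ℝ) * (uk n k : ℝ) / (pn n : ℝ))
        - s * ((w' : ℝ) + ((m' : ℕ) : ℝ) * (uk n k : ℝ) / (pn n : ℝ)) = s / (pn n : ℝ) * (N : ℝ) := by
      rw [hN]
      push_cast
      field_simp
      ring
    have h1 : |s * ((w : ℝ) + ((m : ℕ) : ℝ) * (uk n k : ℝ) / (pn n : ℝ))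
        - s * ((w' : ℝ) + ((m' : ℕ) : ℝ) * (uk n k : ℝ) / (pn n : ℝ))| < 2 * r := by
      rw [abs_lt]; constructor <;> linarith
    rw [hdiff, abs_mul, abs_of_pos (by positivity : (0:ℝ) < s / (pn n : ℝ))] at h1
    have h2 : s / (pn n : ℝ) ≤ s / (pn n : ℝ) * |(N : ℝ)| :=
      le_mul_of_one_le_right (by positivity) habs
    have h3 : 2 * r < s / (pn n : ℝ) := by rw [lt_div_iff₀ hp0]; linarith
    linarith
  obtain ⟨m, hm⟩ := hgood
  set t : ℝ := ((m : ℕ) : ℝ) * (uk n k : ℝ) / (pn n : ℝ) with ht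
  set z : Fin n → ℤ := fun i => ⌊(x i + r) / s - t⌋ with hz
  have hcorner : ∀ i, (gcube n (m : ℕ) k z).c i = s * ((z i : ℝ) + t) := fun i => rfl
  have hside : (gcube n (m : ℕ) k z).s = s := rfl
  have hb2 : ∀ i, s * ((z i : ℝ) + t) ≤ x i + r := fun i => (floor_mem s hs (x i + r) t).1
  have hnext : ∀ i, x i + r < s * ((z i : ℝ) + 1 + t) := fun i => (floor_mem s hs (x i + r) t).2
  have hb1 : ∀ i, s * ((z i : ℝ) + t) ≤ x i - r := by
    intro i
    by_contra hcl
    push_neg at hcl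
    exact hm i ⟨z i, hcl, hb2 i⟩
  refine ⟨m, gcube n (m : ℕ) k z, ⟨k, z, rfl⟩, ?_, ?_⟩
  · intro y hy
    simp only [Cube.set, Set.mem_setOf_eq]
    intro i
    have hdy : dist (y i) (x i) < r := lt_of_le_of_lt (coord_dist_le y x i) (Metric.mem_ball.mp hy)
    rw [Real.dist_eq, abs_lt] at hdy
    rw [hcorner i, hside]
    constructor
    · linarith [hb1 i]
    · have := hnext i
      nlinarith [hb1 i]
  · have hdiam : ∀ y ∈ (gcube n (m : ℕ) k z).set, ∀ y' ∈ (gcube n (m : ℕ) k z).set,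
        dist y y' ≤ Real.sqrt n * s := by
      intro y hy y' hy'
      simp only [Cube.set, Set.mem_setOf_eq] at hy hy'
      rw [EuclideanSpace.dist_eq]
      have hbound : ∀ i, dist (y i) (y' i) ^ 2 ≤ s ^ 2 := by
        intro i
        obtain ⟨h1, h2⟩ := hy i
        obtain ⟨h1', h2'⟩ := hy' i
        rw [hside] at h2 h2'
        rw [Real.dist_eq]
        have habs : |y i - y' i| ≤ s := abs_le.mpr ⟨by linarith, by linarith⟩
        exact pow_le_pow_left₀ (abs_nonneg _) habs 2
      calc Real.sqrt (∑ i, dist (y i) (y' i) ^ 2)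
          ≤ Real.sqrt (∑ _i : Fin n, s ^ 2) :=
            Real.sqrt_le_sqrt (Finset.sum_le_sum fun i _ => hbound i)
        _ = Real.sqrt ((n : ℝ) * s ^ 2) := by
            rw [Finset.sum_const, Finset.card_univ, Fintype.card_fin, nsmul_eq_mul]
        _ = Real.sqrt n * s := by
            rw [Real.sqrt_mul (Nat.cast_nonneg n), Real.sqrt_sq hs.le]
    have h0 : (0:ℝ) ≤ Real.sqrt n * s := by positivity
    refine le_trans (Metric.diam_le_of_forall_dist_le h0 hdiam) ?_
    refine le_trans (mul_le_mul_of_nonneg_left hs2 (Real.sqrt_nonneg _)) (le_of_eq ?_)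
    rw [cN]
    ring

end S6

/-- Theorem A (existence): there exist `n+1` dyadic filtrations of `ℝⁿ` such
that every Euclidean ball `B` is contained in a cube `Q` of one of them with
`diam Q ≤ c_n · diam B`, where `c_n = 2 pₙ √n`. -/
theorem stmt_6 (n : ℕ) :
    ∃ 𝒜 : Fin (n + 1) → Set (Cube n),
      (∀ m, IsDyadicFiltration (𝒜 m)) ∧
      ∀ (x : EuclideanSpace ℝ (Fin n)) (r : ℝ), 0 < r →
        ∃ m, ∃ Q ∈ 𝒜 m, Metric.ball x r ⊆ Q.set ∧
          Metric.diam Q.set ≤ cN n * (2 * r) := by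
  refine ⟨fun m => S6.gridF n m.val, fun m => ⟨?_, S6.partition n m.val, ?_⟩, ?_⟩
  · rintro Q ⟨k, z, rfl⟩
    exact ⟨k, rfl⟩
  · rintro Q ⟨k, z, rfl⟩ Q' ⟨k', z', rfl⟩
    rcases le_total k k' with h | h
    · rcases S6.nest_aux m.val h z z' with hc | hc
      · exact Or.inr (Or.inl hc)
      · exact Or.inr (Or.inr hc)
    · rcases S6.nest_aux m.val h z' z with hc | hc
      · exact Or.inl hc
      · exact Or.inr (Or.inr (by rw [Set.inter_comm]; exact hc))
  · exact S6.covering n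
end

section
/- No family of n dyadic filtrations of R^n suffices for the dyadic covering: for any n dyadic filtrations A_1, ..., A_n of R^n and any constant c > 0, there exists a Euclidean ball B such that no cube Q in the union of the filtrations satisfies B ⊂ Q and diam(Q) <= c * diam(B). -/
open MeasureTheory

namespace Stmt7Aux

noncomputable def sfun (t : ℕ) : ℝ := (2:ℝ) ^ (-(10 * (t:ℤ) + 10))

lemma sfun_pos (t : ℕ) : 0 < sfun t := by
  unfold sfun; positivity

lemma sfun_succ (t : ℕ) : sfun (t+1) * 1024 = sfun t := by
  have h : ((1024:ℝ)) = (2:ℝ) ^ (10:ℤ) := by norm_num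
  rw [sfun, sfun, h, ← zpow_add₀ (two_ne_zero)]
  congr 1

lemma sfun_anti {a b : ℕ} (h : a ≤ b) : sfun b ≤ sfun a := by
  unfold sfun
  apply zpow_le_zpow_right₀ one_le_two
  omega

variable {n : ℕ}

/-- replace coordinate `i` of `x` by `v`. -/
def upd (x : EuclideanSpace ℝ (Fin n)) (i : Fin n) (v : ℝ) : EuclideanSpace ℝ (Fin n) :=
  WithLp.toLp 2 (fun i' => if i' = i then v else x i')

lemma upd_same (x : EuclideanSpace ℝ (Fin n)) (i : Fin n) (v : ℝ) : upd x i v i = v := by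
  simp [upd]

lemma upd_other (x : EuclideanSpace ℝ (Fin n)) {i i' : Fin n} (v : ℝ) (h : i' ≠ i) :
    upd x i v i' = x i' := by simp [upd, h]

lemma corner_mem {Q : Cube n} (hs : 0 < Q.s) : Q.c ∈ Q.set :=
  fun i => ⟨le_refl _, by linarith⟩

lemma upd_mem {Q : Cube n} {x : EuclideanSpace ℝ (Fin n)} (hx : x ∈ Q.set) {i : Fin n} {v : ℝ}
    (h1 : Q.c i ≤ v) (h2 : v < Q.c i + Q.s) : (upd x i v) ∈ Q.set := by
  intro i'
  by_cases h : i' = i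
  · subst h; rw [upd_same]; exact ⟨h1, h2⟩
  · rw [upd_other _ _ h]; exact hx i'

lemma dist_upd (x : EuclideanSpace ℝ (Fin n)) (i : Fin n) (v : ℝ) :
    dist (upd x i v) x = |v - x i| := by
  rw [EuclideanSpace.dist_eq]
  rw [Finset.sum_eq_single i]
  · rw [upd_same, Real.dist_eq, sq_abs, Real.sqrt_sq_eq_abs]
  · intro b _ hb
    rw [upd_other _ _ hb]
    simp
  · simp

lemma cube_bounded (Q : Cube n) : Bornology.IsBounded Q.set := by
  rw [Metric.isBounded_iff]
  refine ⟨Real.sqrt ((n:ℝ) * Q.s^2), ?_⟩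
  intro x hx y hy
  rw [EuclideanSpace.dist_eq]
  apply Real.sqrt_le_sqrt
  have : ∀ i : Fin n, dist (x i) (y i) ^ 2 ≤ Q.s ^ 2 := by
    intro i
    have h1 := hx i
    have h2 := hy i
    have : |x i - y i| ≤ Q.s := by
      rw [abs_le]; constructor <;> linarith [h1.1, h1.2, h2.1, h2.2]
    calc dist (x i) (y i) ^ 2 = |x i - y i| ^ 2 := by rw [Real.dist_eq]
      _ ≤ Q.s ^ 2 := by nlinarith [abs_nonneg (x i - y i)]
  calc ∑ i, dist (x i) (y i) ^ 2 ≤ ∑ _i : Fin n, Q.s ^ 2 := Finset.sum_le_sum (fun i _ => this i)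
    _ = (n:ℝ) * Q.s ^ 2 := by simp [Finset.sum_const]

lemma diam_ge {Q : Cube n} (hs : 0 < Q.s) (i₀ : Fin n) : Q.s / 2 ≤ Metric.diam Q.set := by
  have h1 : Q.c ∈ Q.set := corner_mem hs
  have h2 : upd Q.c i₀ (Q.c i₀ + Q.s/2) ∈ Q.set := upd_mem h1 (by linarith) (by linarith)
  have h3 := Metric.dist_le_diam_of_mem (cube_bounded Q) h2 h1
  rw [dist_upd] at h3
  have : |Q.c i₀ + Q.s/2 - Q.c i₀| = Q.s / 2 := by
    rw [abs_of_nonneg] <;> [ring_nf; linarith]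
  linarith [this ▸ h3]

lemma nested_lower {F : Set (Cube n)}
    (hF : ∀ Q ∈ F, ∀ Q' ∈ F, Q.set ⊆ Q'.set ∨ Q'.set ⊆ Q.set ∨ Q.set ∩ Q'.set = ∅)
    {Q D : Cube n} (hQ : Q ∈ F) (hD : D ∈ F) (hQs : 0 < Q.s) (hDs : 0 < D.s)
    (hle : Q.s ≤ D.s) {x : EuclideanSpace ℝ (Fin n)} (hxQ : x ∈ Q.set) (hxD : x ∈ D.set)
    (i : Fin n) : D.c i ≤ Q.c i := by
  rcases hF Q hQ D hD with h | h | h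
  · exact (h (corner_mem hQs) i).1
  · -- D.set ⊆ Q.set
    have hlow : ∀ i', Q.c i' ≤ D.c i' := fun i' => (h (corner_mem hDs) i').1
    have htop : D.c i + D.s ≤ Q.c i + Q.s := by
      by_contra htop
      push_neg at htop
      set v := max (D.c i) (Q.c i + Q.s) with hv
      have hv1 : D.c i ≤ v := le_max_left _ _
      have hv2 : v < D.c i + D.s := by
        apply max_lt (by linarith) htop
      have := (h (upd_mem (corner_mem hDs) hv1 hv2) i)
      rw [upd_same] at this
      have := this.2
      have : Q.c i + Q.s ≤ v := le_max_right _ _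
      linarith [(h (upd_mem (corner_mem hDs) hv1 hv2) i).2]
    have : D.s ≤ Q.s := by linarith [hlow i]
    have hss : D.s = Q.s := le_antisymm this hle
    linarith
  · exfalso
    have : x ∈ Q.set ∩ D.set := ⟨hxQ, hxD⟩
    rw [h] at this
    exact this

section Construction

variable {n : ℕ} (𝒜 : Fin n → Set (Cube n)) (h𝒜 : ∀ m, IsDyadicFiltration (𝒜 m))

/-- The cube of side `sfun m` in filtration `m` containing `x`. -/
noncomputable def pick (m : ℕ) (x : EuclideanSpace ℝ (Fin n)) : Cube n :=
  if h : m < n then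
    Classical.choose ((h𝒜 ⟨m, h⟩).2.1 (10 * (m:ℤ) + 10) x).exists
  else ⟨x, 0⟩

lemma pick_spec {m : ℕ} (h : m < n) (x : EuclideanSpace ℝ (Fin n)) :
    pick 𝒜 h𝒜 m x ∈ 𝒜 ⟨m, h⟩ ∧ (pick 𝒜 h𝒜 m x).s = sfun m ∧ x ∈ (pick 𝒜 h𝒜 m x).set := by
  unfold pick
  rw [dif_pos h]
  exact Classical.choose_spec ((h𝒜 ⟨m, h⟩).2.1 (10 * (m:ℤ) + 10) x).exists

/-- The iteratively constructed point. -/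
noncomputable def XX : ℕ → EuclideanSpace ℝ (Fin n)
  | 0 => 0
  | (m+1) => WithLp.toLp 2 fun i =>
      if (i:ℕ) < m then XX m i
      else if (i:ℕ) = m then (pick 𝒜 h𝒜 m (XX m)).c i
      else (pick 𝒜 h𝒜 m (XX m)).c i + sfun m / 2

lemma XX_succ (m : ℕ) (i : Fin n) :
    XX 𝒜 h𝒜 (m+1) i =
      if (i:ℕ) < m then XX 𝒜 h𝒜 m i
      else if (i:ℕ) = m then (pick 𝒜 h𝒜 m (XX 𝒜 h𝒜 m)).c i
      else (pick 𝒜 h𝒜 m (XX 𝒜 h𝒜 m)).c i + sfun m / 2 := by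
  simp only [XX, PiLp.toLp_apply]

lemma XX_stable (m m' : ℕ) (h : m ≤ m') (i : Fin n) (hi : (i:ℕ) < m) :
    XX 𝒜 h𝒜 m' i = XX 𝒜 h𝒜 m i := by
  induction m', h using Nat.le_induction with
  | base => rfl
  | succ k hk ih =>
      rw [XX_succ, if_pos (lt_of_lt_of_le hi hk)]
      exact ih

lemma step_mem (m : ℕ) (h : m < n) :
    XX 𝒜 h𝒜 (m+1) ∈ (pick 𝒜 h𝒜 m (XX 𝒜 h𝒜 m)).set := by
  obtain ⟨-, hside, hmem⟩ := pick_spec 𝒜 h𝒜 h (XX 𝒜 h𝒜 m)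
  set D := pick 𝒜 h𝒜 m (XX 𝒜 h𝒜 m)
  have hs : 0 < D.s := by rw [hside]; exact sfun_pos m
  intro i
  rw [XX_succ]
  rcases lt_trichotomy ((i:ℕ)) m with h1 | h1 | h1
  · rw [if_pos h1]; exact hmem i
  · rw [if_neg (by omega), if_pos h1]
    exact ⟨le_refl _, by linarith⟩
  · rw [if_neg (by omega), if_neg (by omega)]
    rw [hside]
    constructor <;> [linarith [sfun_pos m]; linarith [sfun_pos m]]

lemma step_dist (m : ℕ) (i : Fin n) :
    |XX 𝒜 h𝒜 (m+1) i - XX 𝒜 h𝒜 m i| ≤ sfun m := by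
  by_cases h : m < n
  · obtain ⟨-, hside, hmem⟩ := pick_spec 𝒜 h𝒜 h (XX 𝒜 h𝒜 m)
    have hx := hmem i
    rw [hside] at hx
    have hsp := sfun_pos m
    rw [XX_succ]
    rcases lt_trichotomy ((i:ℕ)) m with h1 | h1 | h1
    · rw [if_pos h1]; simp [hsp.le]
    · rw [if_neg (by omega), if_pos h1, abs_le]
      constructor <;> linarith [hx.1, hx.2]
    · rw [if_neg (by omega), if_neg (by omega), abs_le]
      constructor <;> linarith [hx.1, hx.2]
  · have hi : (i:ℕ) < m := lt_of_lt_of_le i.isLt (not_lt.1 h)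
    rw [XX_succ, if_pos hi]
    simp [(sfun_pos m).le]

lemma drift (m m' : ℕ) (h : m ≤ m') (i : Fin n) :
    |XX 𝒜 h𝒜 m' i - XX 𝒜 h𝒜 m i| ≤ 2 * sfun m - 2 * sfun m' := by
  induction m', h using Nat.le_induction with
  | base => simp
  | succ k hk ih =>
      have h1 := step_dist 𝒜 h𝒜 k i
      have h2 := sfun_succ k
      have h3 := sfun_pos (k+1)
      calc |XX 𝒜 h𝒜 (k+1) i - XX 𝒜 h𝒜 m i|
          ≤ |XX 𝒜 h𝒜 (k+1) i - XX 𝒜 h𝒜 k i| + |XX 𝒜 h𝒜 k i - XX 𝒜 h𝒜 m i| := by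
            have := abs_sub_abs_le_abs_sub (XX 𝒜 h𝒜 (k+1) i) (XX 𝒜 h𝒜 k i)
            exact abs_sub_le _ _ _
        _ ≤ 2 * sfun m - 2 * sfun (k+1) := by linarith

lemma final_pin (j : ℕ) (hj : j < n) :
    XX 𝒜 h𝒜 n ⟨j, hj⟩ = (pick 𝒜 h𝒜 j (XX 𝒜 h𝒜 j)).c ⟨j, hj⟩ := by
  rw [XX_stable 𝒜 h𝒜 (j+1) n hj (⟨j, hj⟩ : Fin n) (by simp)]
  rw [XX_succ]
  simp

lemma final_mem (j : ℕ) (hj : j < n) :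
    XX 𝒜 h𝒜 n ∈ (pick 𝒜 h𝒜 j (XX 𝒜 h𝒜 j)).set := by
  obtain ⟨-, hside, -⟩ := pick_spec 𝒜 h𝒜 hj (XX 𝒜 h𝒜 j)
  set D := pick 𝒜 h𝒜 j (XX 𝒜 h𝒜 j) with hD
  intro i
  by_cases hi : (i:ℕ) < j + 1
  · rw [XX_stable 𝒜 h𝒜 (j+1) n hj i hi]
    exact step_mem 𝒜 h𝒜 j hj i
  · push_neg at hi
    have h1 : XX 𝒜 h𝒜 (j+1) i = D.c i + sfun j / 2 := by
      rw [XX_succ, if_neg (by omega), if_neg (by omega)]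
    have h2 := drift 𝒜 h𝒜 (j+1) n hj i
    rw [h1] at h2
    rw [abs_le] at h2
    have h3 := sfun_succ j
    have h4 := sfun_pos (j+1)
    have h5 := sfun_pos n
    rw [hside]
    constructor <;> linarith [h2.1, h2.2]

end Construction

end Stmt7Aux

/-- Theorem A (optimality): no family of `n` dyadic filtrations of `ℝⁿ`
suffices: for every constant `c > 0` there is a ball contained in no cube `Q`
of the filtrations with `diam Q ≤ c · diam B`. -/
theorem stmt_7 (n : ℕ) (𝒜 : Fin n → Set (Cube n))
    (h𝒜 : ∀ m, IsDyadicFiltration (𝒜 m)) (c : ℝ) (hc : 0 < c) :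
    ∃ (x : EuclideanSpace ℝ (Fin n)) (r : ℝ), 0 < r ∧
      ∀ m, ∀ Q ∈ 𝒜 m,
        ¬ (Metric.ball x r ⊆ Q.set ∧ Metric.diam Q.set ≤ c * (2 * r)) := by
  classical
  rcases Nat.eq_zero_or_pos n with hn | hn
  · subst hn
    exact ⟨0, 1, one_pos, fun m => m.elim0⟩
  · set x := Stmt7Aux.XX 𝒜 h𝒜 n with hx
    set r := Stmt7Aux.sfun (n-1) / (4 * c) with hr
    have hrpos : 0 < r := div_pos (Stmt7Aux.sfun_pos (n-1)) (by linarith)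
    refine ⟨x, r, hrpos, ?_⟩
    rintro m Q hQ ⟨hball, hdiam⟩
    have hj : (m:ℕ) < n := m.isLt
    set D := Stmt7Aux.pick 𝒜 h𝒜 (m:ℕ) (Stmt7Aux.XX 𝒜 h𝒜 (m:ℕ)) with hD
    obtain ⟨hDmem', hside, -⟩ := Stmt7Aux.pick_spec 𝒜 h𝒜 hj (Stmt7Aux.XX 𝒜 h𝒜 (m:ℕ))
    have hDmem : D ∈ 𝒜 m := by
      have : (⟨(m:ℕ), hj⟩ : Fin n) = m := by ext; rfl
      rw [this] at hDmem'
      exact hDmem'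
    have hQs : 0 < Q.s := by
      obtain ⟨k, hk⟩ := (h𝒜 m).1 Q hQ
      rw [hk]; positivity
    have hxQ : x ∈ Q.set := hball (Metric.mem_ball_self hrpos)
    have hxD : x ∈ D.set := Stmt7Aux.final_mem 𝒜 h𝒜 (m:ℕ) hj
    by_cases hcase : Q.s ≤ Stmt7Aux.sfun (m:ℕ)
    · -- small cube: it is nested inside `D`, but `x` is on the lower face of `D`
      -- in coordinate `m`, so the ball pokes out below it
      have hle : Q.s ≤ D.s := by rw [hside]; exact hcase
      have hcc : D.c m ≤ Q.c m :=
        Stmt7Aux.nested_lower ((h𝒜 m).2.2) hQ hDmem hQs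
          (by rw [hside]; exact Stmt7Aux.sfun_pos _) hle hxQ hxD m
      have hpin : x m = D.c m := by
        have := Stmt7Aux.final_pin 𝒜 h𝒜 (m:ℕ) hj
        have hm : (⟨(m:ℕ), hj⟩ : Fin n) = m := by ext; rfl
        rw [hm] at this
        exact this
      have hp : Stmt7Aux.upd x m (x m - r/2) ∈ Metric.ball x r := by
        rw [Metric.mem_ball, Stmt7Aux.dist_upd]
        rw [show x m - r/2 - x m = -(r/2) by ring, abs_neg, abs_of_pos (by linarith)]
        linarith
      have hmem := hball hp m
      rw [Stmt7Aux.upd_same] at hmem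
      have := hmem.1
      linarith
    · -- large cube: its diameter is too big
      push_neg at hcase
      have h1 : Q.s / 2 ≤ Metric.diam Q.set := Stmt7Aux.diam_ge hQs m
      have h2 : Stmt7Aux.sfun (n-1) ≤ Stmt7Aux.sfun (m:ℕ) := Stmt7Aux.sfun_anti (by omega)
      have h3 : c * (2*r) = Stmt7Aux.sfun (n-1) / 2 := by
        rw [hr]; field_simp; ring
      rw [h3] at hdiam
      linarith
end

section
/- Given n dyadic filtrations A_1,...,A_n of R^n, there exist cubes Q_m in A_m of side length 1 (one from each filtration) whose boundaries have a common point: ∩_{m=1}^n ∂Q_m ≠ ∅. -/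
open MeasureTheory

namespace DyadicAux

variable {n : ℕ} {F : Set (Cube n)}

lemma c_mem_set {Q : Cube n} (h : 0 < Q.s) : Q.c ∈ Q.set :=
  fun i => ⟨le_refl _, by linarith⟩

lemma subset_bounds {Q R : Cube n} (hq : 0 < Q.s) (hsub : Q.set ⊆ R.set) (i : Fin n) :
    R.c i ≤ Q.c i ∧ Q.c i + Q.s ≤ R.c i + R.s := by
  have h1 := hsub (c_mem_set hq) i
  refine ⟨h1.1, ?_⟩
  by_contra hlt
  push_neg at hlt
  set t := max (Q.c i) (R.c i + R.s) with ht
  have hz : (Q.c + EuclideanSpace.single i (t - Q.c i)) ∈ Q.set := by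
    intro j
    by_cases hj : j = i
    · subst hj
      simp only [PiLp.add_apply, EuclideanSpace.single_apply, if_pos rfl, eq_self_iff_true,
        if_true]
      constructor
      · have := le_max_left (Q.c j) (R.c j + R.s); linarith
      · have := max_lt (by linarith : Q.c j < Q.c j + Q.s) hlt; linarith
    · simp only [PiLp.add_apply, EuclideanSpace.single_apply, if_neg hj, add_zero]
      exact ⟨le_refl _, by linarith⟩
  have h2 := (hsub hz i).2
  simp only [PiLp.add_apply, EuclideanSpace.single_apply, if_pos rfl, eq_self_iff_true,
    if_true] at h2
  have := le_max_right (Q.c i) (R.c i + R.s)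
  linarith

/-- The unique cube of generation `k` containing `x`. -/
noncomputable def cub (hF : IsDyadicFiltration F) (k : ℤ) (x : EuclideanSpace ℝ (Fin n)) :
    Cube n := (hF.2.1 k x).exists.choose

lemma cub_spec (hF : IsDyadicFiltration F) (k : ℤ) (x : EuclideanSpace ℝ (Fin n)) :
    cub hF k x ∈ F ∧ (cub hF k x).s = (2:ℝ) ^ (-k) ∧ x ∈ (cub hF k x).set :=
  (hF.2.1 k x).exists.choose_spec

lemma cub_eq (hF : IsDyadicFiltration F) {k : ℤ} {x : EuclideanSpace ℝ (Fin n)} {Q : Cube n}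
    (h1 : Q ∈ F) (h2 : Q.s = (2:ℝ) ^ (-k)) (h3 : x ∈ Q.set) : Q = cub hF k x :=
  (hF.2.1 k x).unique ⟨h1, h2, h3⟩ (cub_spec hF k x)

lemma cub_s_pos (hF : IsDyadicFiltration F) (k : ℤ) (x : EuclideanSpace ℝ (Fin n)) :
    0 < (cub hF k x).s := by
  rw [(cub_spec hF k x).2.1]
  positivity

/-- Nesting: smaller-generation cube containing `x` is inside bigger one. -/
lemma cub_subset (hF : IsDyadicFiltration F) {k k' : ℤ} (h : k' ≤ k)
    (x : EuclideanSpace ℝ (Fin n)) : (cub hF k x).set ⊆ (cub hF k' x).set := by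
  rcases Nat.eq_zero_or_pos n with hn | hn
  · subst hn; intro y _ i; exact i.elim0
  obtain ⟨i0⟩ : Nonempty (Fin n) := ⟨⟨0, hn⟩⟩
  obtain ⟨hm, hs, hx⟩ := cub_spec hF k x
  obtain ⟨hm', hs', hx'⟩ := cub_spec hF k' x
  rcases hF.2.2 _ hm _ hm' with h1 | h1 | h1
  · exact h1
  · have hb := subset_bounds (by rw [hs']; positivity) h1 i0
    have h2 : (2:ℝ) ^ (-k') ≤ (2:ℝ) ^ (-k) := by
      rw [← hs, ← hs']; linarith [hb.1, hb.2]
    have hk : k = k' := by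
      have := (zpow_le_zpow_iff_right₀ (by norm_num : (1:ℝ) < 2)).1 h2
      omega
    subst hk
    exact h1
  · exact absurd (Set.mem_inter hx hx') (by rw [h1]; exact fun h => h)

lemma two_zpow_succ (k : ℤ) : (2:ℝ) ^ (-(k-1)) = 2 * (2:ℝ) ^ (-k) := by
  rw [show (-(k-1)) = 1 + -k by ring, zpow_add₀ (by norm_num : (2:ℝ) ≠ 0), zpow_one]

/-- Grid rigidity: the generation-`k` cube whose corner is a `{0,s}`-perturbation of the
corner of a generation-`k-1` cube `R` in `F` has exactly that perturbed corner. -/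
lemma grid_corner (hF : IsDyadicFiltration F) {k : ℤ} {R : Cube n} (hR : R ∈ F)
    (hRs : R.s = (2:ℝ) ^ (-(k-1))) :
    ∀ N : ℕ, ∀ v : Fin n → Bool,
      (Finset.univ.filter (fun i => v i = true)).card ≤ N →
      ∀ i, (cub hF k (WithLp.toLp 2 (fun j => R.c j + if v j then (2:ℝ)^(-k) else 0))).c i
            = R.c i + (if v i then (2:ℝ)^(-k) else 0) := by
  set s : ℝ := (2:ℝ) ^ (-k) with hsdef
  have hs : 0 < s := by positivity
  have hR2 : R.s = 2 * s := by rw [hRs]; exact two_zpow_succ k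
  intro N
  induction N with
  | zero =>
    intro v hcard i
    set p : EuclideanSpace ℝ (Fin n) := WithLp.toLp 2 (fun j => R.c j + if v j then s else 0) with hp
    set Q : Cube n := cub hF k p with hQ
    obtain ⟨hQm, hQs, hQp⟩ := cub_spec hF k p
    have hpR : p ∈ R.set := by
      intro j
      constructor
      · by_cases hv : v j <;> simp [hp, hv] <;> linarith
      · by_cases hv : v j <;> simp [hp, hv] <;> linarith
    have hQR : Q.set ⊆ R.set := by
      have := cub_eq hF hR (by rw [hRs]) hpR
      rw [this, hQ]
      exact cub_subset hF (by omega) p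
    have hb := fun j => subset_bounds (by rw [hQs]; positivity) hQR j
    by_contra hne
    -- some coordinate where Q.c i ≠ p i; it forces v i = true, contradicting card = 0
    have hQle : ∀ j, Q.c j ≤ p j := fun j => (hQp j).1
    have : ∃ j, Q.c j ≠ p j := by
      by_contra hall
      push_neg at hall
      apply hne
      rw [hall i, hp]
    obtain ⟨j, hj⟩ := this
    have hjlt : Q.c j < p j := lt_of_le_of_ne (hQle j) hj
    have hvj : v j = true := by
      by_contra hv
      simp only [Bool.not_eq_true] at hv
      have : p j = R.c j := by simp [hp, hv]
      have := (hb j).1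
      linarith
    have : j ∈ Finset.univ.filter (fun i => v i = true) := by simp [hvj]
    have := Finset.card_pos.2 ⟨j, this⟩
    omega
  | succ N ih =>
    intro v hcard i
    set p : EuclideanSpace ℝ (Fin n) := WithLp.toLp 2 (fun j => R.c j + if v j then s else 0) with hp
    set Q : Cube n := cub hF k p with hQ
    obtain ⟨hQm, hQs, hQp⟩ := cub_spec hF k p
    have hpR : p ∈ R.set := by
      intro j
      constructor
      · by_cases hv : v j <;> simp [hp, hv] <;> linarith
      · by_cases hv : v j <;> simp [hp, hv] <;> linarith
    have hQR : Q.set ⊆ R.set := by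
      have := cub_eq hF hR (by rw [hRs]) hpR
      rw [this, hQ]
      exact cub_subset hF (by omega) p
    have hb := fun j => subset_bounds (by rw [hQs]; positivity) hQR j
    have hQle : ∀ j, Q.c j ≤ p j := fun j => (hQp j).1
    -- main claim: Q.c = p
    have key : ∀ j, Q.c j = p j := by
      by_contra hall
      push_neg at hall
      obtain ⟨j0, hj0⟩ := hall
      have hj0lt : Q.c j0 < p j0 := lt_of_le_of_ne (hQle j0) hj0
      have hvj0 : v j0 = true := by
        by_contra hv
        simp only [Bool.not_eq_true] at hv
        have : p j0 = R.c j0 := by simp [hp, hv]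
        have := (hb j0).1
        linarith
      set w : Fin n → Bool := fun j => decide (R.c j + s ≤ Q.c j) with hw
      have hwv : ∀ j, w j = true → v j = true := by
        intro j hwj
        rw [hw] at hwj
        have h1 : R.c j + s ≤ Q.c j := of_decide_eq_true hwj
        by_contra hv
        simp only [Bool.not_eq_true] at hv
        have : p j = R.c j := by simp [hp, hv]
        have := hQle j
        linarith
      have hwj0 : w j0 = false := by
        rw [hw]
        apply decide_eq_false
        push_neg
        have : p j0 = R.c j0 + s := by simp [hp, hvj0]
        linarith
      have hcardw : (Finset.univ.filter (fun i => w i = true)).card ≤ N := by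
        have hss : Finset.univ.filter (fun i => w i = true)
            ⊂ Finset.univ.filter (fun i => v i = true) := by
          constructor
          · intro j hj
            simp only [Finset.mem_filter, Finset.mem_univ, true_and] at hj ⊢
            exact hwv j hj
          · intro hsup
            have hmem := hsup (by simp [hvj0] : j0 ∈ Finset.univ.filter (fun i => v i = true))
            simp only [Finset.mem_filter, Finset.mem_univ, true_and] at hmem
            simp [hmem] at hwj0
        have := Finset.card_lt_card hss
        omega
      have hwcorner := ih w hcardw
      set q : EuclideanSpace ℝ (Fin n) := WithLp.toLp 2 (fun j => R.c j + if w j then s else 0) with hq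
      set Q' : Cube n := cub hF k q with hQ'
      obtain ⟨hQ'm, hQ's, hQ'q⟩ := cub_spec hF k q
      -- Q.c lies in Q'.set
      have hcin : Q.c ∈ Q'.set := by
        intro j
        rw [hwcorner j]
        by_cases hwj : w j = true
        · have h1 : R.c j + s ≤ Q.c j := by
            have h := hwj; rw [hw] at h; exact of_decide_eq_true h
          have h2 := (hb j).2
          constructor
          · simp [hwj]; linarith
          · simp [hwj]
            rw [hQs] at h2
            linarith
        · simp only [Bool.not_eq_true] at hwj
          have h1 : ¬ (R.c j + s ≤ Q.c j) := by
            intro hcon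
            have : w j = true := by rw [hw]; exact decide_eq_true hcon
            rw [this] at hwj; exact absurd hwj (by simp)
          push_neg at h1
          constructor
          · simp [hwj]; exact (hb j).1
          · simp [hwj]; linarith
      have hcinQ : Q.c ∈ Q.set := by
        intro j
        refine ⟨le_refl _, ?_⟩
        rw [hQs]
        linarith
      have hQQ' : Q = Q' :=
        (cub_eq hF hQm hQs hcinQ).trans (cub_eq hF hQ'm hQ's hcin).symm
      -- contradiction at j0
      have h1 : Q.c j0 = R.c j0 := by
        rw [hQQ', hwcorner j0]
        simp [hwj0]
      have h2 : p j0 = R.c j0 + s := by simp [hp, hvj0]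
      have h3 := (hQp j0).2
      rw [hQs, h1, h2] at h3
      linarith
    rw [key i, hp]


/-- Halving step: a generation-`k` cube contained in a generation-`k-1` cube `R` has its
corner on the half-grid of `R`. -/
lemma halving (hF : IsDyadicFiltration F) {k : ℤ} {R Q : Cube n} (hR : R ∈ F)
    (hRs : R.s = (2:ℝ) ^ (-(k-1))) (hQm : Q ∈ F) (hQs : Q.s = (2:ℝ) ^ (-k))
    (hsub : Q.set ⊆ R.set) (i : Fin n) :
    Q.c i = R.c i ∨ Q.c i = R.c i + (2:ℝ)^(-k) := by
  set s : ℝ := (2:ℝ) ^ (-k) with hsdef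
  have hs : 0 < s := by positivity
  have hR2 : R.s = 2 * s := by rw [hRs]; exact two_zpow_succ k
  have hb := fun j => subset_bounds (by rw [hQs]; positivity) hsub j
  set w : Fin n → Bool := fun j => decide (R.c j + s ≤ Q.c j) with hw
  have hcardw : (Finset.univ.filter (fun i => w i = true)).card ≤ n := by
    refine le_trans (Finset.card_filter_le _ _) ?_
    simp
  have hwcorner := grid_corner hF hR hRs n w hcardw
  set q : EuclideanSpace ℝ (Fin n) := WithLp.toLp 2 (fun j => R.c j + if w j then s else 0) with hq
  set Q' : Cube n := cub hF k q with hQ'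
  obtain ⟨hQ'm, hQ's, hQ'q⟩ := cub_spec hF k q
  have hcin : Q.c ∈ Q'.set := by
    intro j
    rw [hwcorner j]
    by_cases hwj : w j = true
    · have h1 : R.c j + s ≤ Q.c j := by
        have h := hwj; rw [hw] at h; exact of_decide_eq_true h
      have h2 := (hb j).2
      rw [hQs, hR2] at h2
      have hQ's2 : Q'.s = s := by rw [hQ', hQ's, ← hsdef]
      constructor
      · rw [if_pos hwj, ← hsdef]; linarith
      · rw [if_pos hwj, ← hsdef, hQ's2]; linarith
    · have h1 : ¬ (R.c j + s ≤ Q.c j) := by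
        intro hcon
        have : w j = true := by rw [hw]; exact decide_eq_true hcon
        exact absurd this hwj
      push_neg at h1
      have hQ's2 : Q'.s = s := by rw [hQ', hQ's, ← hsdef]
      constructor
      · rw [if_neg hwj, add_zero]; exact (hb j).1
      · rw [if_neg hwj, add_zero, hQ's2]; linarith
  have hcinQ : Q.c ∈ Q.set := by
    intro j
    refine ⟨le_refl _, ?_⟩
    rw [hQs]
    linarith
  have hQQ' : Q = Q' :=
    (cub_eq hF hQm hQs hcinQ).trans (cub_eq hF hQ'm hQ's hcin).symm
  have := hwcorner i
  rw [← hQQ'] at this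
  by_cases hwi : w i = true
  · right; rw [this, if_pos hwi]
  · left; rw [this, if_neg hwi, add_zero]

lemma cub_s_nat (hF : IsDyadicFiltration F) (N : ℕ) (x : EuclideanSpace ℝ (Fin n)) :
    (cub hF (-(N:ℤ)) x).s = (2:ℝ)^N := by
  rw [(cub_spec hF (-(N:ℤ)) x).2.1, neg_neg, zpow_natCast]

/-- Corners of unit cubes inside a common generation-`-N` cube differ by integers. -/
lemma chain (hF : IsDyadicFiltration F) :
    ∀ N : ℕ, ∀ x z : EuclideanSpace ℝ (Fin n), z ∈ (cub hF (-(N:ℤ)) x).set →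
      ∀ i, ∃ t : ℤ, (cub hF 0 z).c i = (cub hF (-(N:ℤ)) x).c i + t := by
  intro N
  induction N with
  | zero =>
    intro x z hz i
    refine ⟨0, ?_⟩
    have h0 : (-(((0:ℕ)):ℤ)) = 0 := by norm_num
    obtain ⟨hm, hs, _⟩ := cub_spec hF (-((0:ℕ):ℤ)) x
    have heq : cub hF (-((0:ℕ):ℤ)) x = cub hF 0 z := by
      refine cub_eq hF hm ?_ hz
      rw [hs, h0]
    rw [← heq]
    simp
  | succ N ih =>
    intro x z hz i
    obtain ⟨hm, hs, _⟩ := cub_spec hF (-((N+1:ℕ):ℤ)) x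
    have heq : cub hF (-((N+1:ℕ):ℤ)) x = cub hF (-((N+1:ℕ):ℤ)) z :=
      cub_eq hF hm hs hz
    have hsub : (cub hF (-(N:ℤ)) z).set ⊆ (cub hF (-((N+1:ℕ):ℤ)) x).set := by
      rw [heq]
      exact cub_subset hF (by push_cast; omega) z
    obtain ⟨hmm, hms, hmz⟩ := cub_spec hF (-(N:ℤ)) z
    have hRs' : (cub hF (-((N+1:ℕ):ℤ)) x).s = (2:ℝ) ^ (-((-(N:ℤ)) - 1)) := by
      rw [hs]; congr 1; push_cast; ring
    have hhalf := halving hF hm hRs' hmm hms hsub i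
    obtain ⟨t, ht⟩ := ih z z hmz i
    have hpow : (2:ℝ)^(-(-(N:ℤ))) = ((2^N : ℤ) : ℝ) := by
      push_cast
      rw [neg_neg, zpow_natCast]
    rcases hhalf with h | h
    · exact ⟨t, by rw [ht, h]⟩
    · refine ⟨t + 2^N, ?_⟩
      rw [ht, h, hpow]
      push_cast
      ring

lemma mem_frontier_of {Q : Cube n} {p : EuclideanSpace ℝ (Fin n)} (hp : p ∈ Q.set)
    {i : Fin n} (hpi : p i = Q.c i) : p ∈ frontier Q.set := by
  refine ⟨subset_closure hp, ?_⟩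
  intro hint
  obtain ⟨ε, hε, hball⟩ := Metric.isOpen_iff.1 isOpen_interior p hint
  have hball' : Metric.ball p ε ⊆ Q.set := hball.trans interior_subset
  set p' : EuclideanSpace ℝ (Fin n) := p - EuclideanSpace.single i (ε/2) with hp'
  have hd : dist p' p = ε/2 := by
    rw [dist_eq_norm, hp', sub_sub_cancel_left, norm_neg, EuclideanSpace.norm_single]
    rw [Real.norm_eq_abs, abs_of_pos (by linarith)]
  have hmem : p' ∈ Q.set := hball' (by rw [Metric.mem_ball, hd]; linarith)
  have h1 := (hmem i).1
  rw [hp'] at h1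
  simp only [PiLp.sub_apply, EuclideanSpace.single_apply, if_pos rfl, eq_self_iff_true,
    if_true] at h1
  rw [hpi] at h1
  linarith


/-- The auxiliary anchor sequence: `y (m+1)` is the center of the generation
`-(n-m+2)` cube of the `m`-th filtration containing `y m`. -/
noncomputable def yseq {n : ℕ} (𝒜 : Fin n → Set (Cube n))
    (h𝒜 : ∀ m, IsDyadicFiltration (𝒜 m)) : ℕ → EuclideanSpace ℝ (Fin n)
  | 0 => 0
  | (m+1) =>
    if h : m < n then
      (WithLp.toLp 2 (fun i => (cub (h𝒜 ⟨m, h⟩) (-((n - m + 2 : ℕ) : ℤ)) (yseq 𝒜 h𝒜 m)).c i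
        + 2 ^ (n - m + 1)) : EuclideanSpace ℝ (Fin n))
    else yseq 𝒜 h𝒜 m

end DyadicAux


open DyadicAux in
/-- Given `n` dyadic filtrations of `ℝⁿ`, one can choose a unit cube from each
filtration so that their boundaries have a common point. -/
theorem stmt_8 (n : ℕ) (𝒜 : Fin n → Set (Cube n))
    (h𝒜 : ∀ m, IsDyadicFiltration (𝒜 m)) :
    ∃ Q : Fin n → Cube n,
      (∀ m, Q m ∈ 𝒜 m ∧ (Q m).s = 1) ∧
      (⋂ m, frontier (Q m).set).Nonempty := by
  classical
  set y : ℕ → EuclideanSpace ℝ (Fin n) := yseq 𝒜 h𝒜 with hy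
  set Rc : Fin n → Cube n :=
    fun m => cub (h𝒜 m) (-((n - m.1 + 2 : ℕ) : ℤ)) (y m.1) with hRc
  have hystep : ∀ m : Fin n, ∀ i, y (m.1+1) i = (Rc m).c i + 2^(n - m.1 + 1) := by
    intro m i
    show yseq 𝒜 h𝒜 (m.1+1) i = _
    rw [yseq]
    rw [dif_pos m.2]
  have hymem : ∀ m : Fin n, y m.1 ∈ (Rc m).set := fun m => (cub_spec _ _ _).2.2
  have hRs : ∀ m : Fin n, (Rc m).s = 2^(n - m.1 + 2) := fun m => cub_s_nat _ _ _
  have factB : ∀ d m, m + d = n → ∀ i, |y n i - y m i| ≤ 2^(d+2) - 4 := by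
    intro d
    induction d with
    | zero =>
      intro m hm i
      have hmn : m = n := by omega
      subst hmn
      simp only [sub_self, abs_zero]
      norm_num
    | succ d ih =>
      intro m hm i
      have hmn : m < n := by omega
      set mf : Fin n := ⟨m, hmn⟩ with hmf
      have h1 := ih (m+1) (by omega) i
      have hstep : |y (m+1) i - y m i| ≤ 2^(d+2) := by
        have hmem := hymem mf i
        have hsv := hRs mf
        have hyv := hystep mf i
        have e1 : n - m + 1 = d + 2 := by omega
        have e2 : n - m + 2 = d + 3 := by omega
        simp only [hmf] at hmem hsv hyv
        rw [e1] at hyv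
        rw [e2] at hsv
        rw [hsv] at hmem
        have hpw : (2:ℝ)^(d+3) = 2 * 2^(d+2) := by ring
        rw [abs_le]
        constructor
        · rw [hyv]; linarith [hmem.2, hpw]
        · rw [hyv]; linarith [hmem.1]
      calc |y n i - y m i| ≤ |y n i - y (m+1) i| + |y (m+1) i - y m i| :=
            abs_sub_le _ _ _
        _ ≤ (2^(d+2) - 4) + 2^(d+2) := add_le_add h1 hstep
        _ ≤ 2^(d+1+2) - 4 := by
            have hpw : (2:ℝ)^(d+1+2) = 2 * 2^(d+2) := by ring
            linarith
  have margin : ∀ m : Fin n, ∀ i,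
      4 ≤ y n i - (Rc m).c i ∧ y n i - (Rc m).c i ≤ 2^(n - m.1 + 2) - 4 := by
    intro m i
    have hmn : m.1 < n := m.2
    set d := n - (m.1 + 1) with hd
    have h1 := factB d (m.1+1) (by omega) i
    have hyv := hystep m i
    have e1 : n - m.1 + 1 = d + 2 := by omega
    have e2 : n - m.1 + 2 = d + 3 := by omega
    rw [e1] at hyv
    rw [e2]
    have h2 : (2:ℝ)^(d+3) = 2*2^(d+2) := by ring
    have h3 := abs_le.1 h1
    constructor
    · linarith [h3.1, hyv]
    · linarith [h3.2, hyv]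
  have hxR : ∀ m : Fin n, y n ∈ (Rc m).set := by
    intro m
    intro i
    have hm := margin m i
    have hsv := hRs m
    constructor
    · linarith [hm.1]
    · rw [hsv]; linarith [hm.2]
  set q : Fin n → Cube n := fun i => cub (h𝒜 i) 0 (y n) with hq
  have hone : ∀ i : Fin n, (q i).s = 1 := by
    intro i
    rw [hq]
    rw [(cub_spec (h𝒜 i) 0 (y n)).2.1]
    norm_num
  have hqi : ∀ i : Fin n, (q i).c i ≤ y n i ∧ y n i < (q i).c i + 1 := by
    intro i
    have h := (cub_spec (h𝒜 i) 0 (y n)).2.2 i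
    rw [hone i] at h
    exact h
  set p : EuclideanSpace ℝ (Fin n) := (WithLp.toLp 2 (fun i => (q i).c i) : EuclideanSpace ℝ (Fin n))
    with hp
  have hp1 : ∀ i, y n i - 1 < p i ∧ p i ≤ y n i := by
    intro i
    have h := hqi i
    constructor
    · show y n i - 1 < (q i).c i; linarith [h.2]
    · exact h.1
  have hpR : ∀ m : Fin n, p ∈ (Rc m).set := by
    intro m i
    have hm := margin m i
    have h1 := hp1 i
    have hsv := hRs m
    constructor
    · linarith [hm.1, h1.1]
    · rw [hsv]; linarith [hm.2, h1.2]
  set QQ : Fin n → Cube n := fun m => cub (h𝒜 m) 0 p with hQQ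
  have hcorner : ∀ m : Fin n, (QQ m).c m = p m := by
    intro m
    obtain ⟨t1, ht1⟩ := chain (h𝒜 m) (n - m.1 + 2) (y m.1) p (hpR m) m
    obtain ⟨t2, ht2⟩ := chain (h𝒜 m) (n - m.1 + 2) (y m.1) (y n) (hxR m) m
    have hpm : p m = (q m).c m := rfl
    have hb := (cub_spec (h𝒜 m) 0 p).2.2 m
    have hs1 : (QQ m).s = 1 := by
      rw [hQQ, (cub_spec (h𝒜 m) 0 p).2.1]; norm_num
    rw [hs1] at hb
    -- hb : (QQ m).c m ≤ p m ∧ p m < (QQ m).c m + 1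
    have heq : (QQ m).c m = p m + ((t1 - t2 : ℤ) : ℝ) := by
      have hqq : (QQ m).c m = (cub (h𝒜 m) 0 p).c m := rfl
      have hq2 : p m = (cub (h𝒜 m) 0 (y n)).c m := rfl
      rw [hqq, ht1, hq2, ht2]
      push_cast
      ring
    have hzle : ((t1 - t2 : ℤ) : ℝ) ≤ 0 := by linarith [hb.1, heq]
    have hzgt : (-1 : ℝ) < ((t1 - t2 : ℤ) : ℝ) := by linarith [hb.2, heq]
    have hz0 : (t1 - t2 : ℤ) = 0 := by
      have h1 : (t1 - t2 : ℤ) ≤ 0 := by exact_mod_cast hzle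
      have h2 : (-1 : ℤ) < (t1 - t2 : ℤ) := by exact_mod_cast hzgt
      omega
    rw [heq, hz0]
    simp
  refine ⟨QQ, fun m => ⟨(cub_spec (h𝒜 m) 0 p).1, ?_⟩, ⟨p, ?_⟩⟩
  · rw [hQQ, (cub_spec (h𝒜 m) 0 p).2.1]; norm_num
  · rw [Set.mem_iInter]
    intro m
    exact mem_frontier_of (cub_spec (h𝒜 m) 0 p).2.2 (hcorner m).symm
end

section
/- Let mu be a Borel measure on R^n with k-dimensional polynomial growth: mu(B(x,r)) <= c_mu * r^k for all x and r > 0, where 0 < k <= n. Let alpha > 1 and beta > (c_n * alpha)^k, and let A be the union of the n+1 dyadic filtrations from Theorem A (with constant c_n). Then for every x in supp(mu) and every r > 0 there exists an (alpha, beta)-doubling cube Q in A with x in Q and side length l(Q) > r. -/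
open MeasureTheory

namespace CubeAux


variable {n : ℕ}

lemma dist_le_aux {x y : EuclideanSpace ℝ (Fin n)} {s : ℝ} (hs : 0 ≤ s)
    (h : ∀ i, |x i - y i| ≤ s) : dist x y ≤ s * Real.sqrt n := by
  rw [EuclideanSpace.dist_eq]
  have h1 : ∑ i, dist (x i) (y i) ^ 2 ≤ (n : ℝ) * s ^ 2 := by
    calc ∑ i, dist (x i) (y i) ^ 2 ≤ ∑ _i : Fin n, s ^ 2 := by
          refine Finset.sum_le_sum fun i _ => ?_
          rw [Real.dist_eq]
          exact sq_le_sq' (by linarith [abs_nonneg (x i - y i)]) (h i)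
      _ = (n : ℝ) * s ^ 2 := by simp [Finset.sum_const, mul_comm]
  calc Real.sqrt (∑ i, dist (x i) (y i) ^ 2) ≤ Real.sqrt ((n : ℝ) * s ^ 2) :=
        Real.sqrt_le_sqrt h1
    _ = s * Real.sqrt n := by
        rw [Real.sqrt_mul (by positivity), Real.sqrt_sq hs]; ring

lemma dist_lt_aux (hn : 1 ≤ n) {x y : EuclideanSpace ℝ (Fin n)} {s : ℝ} (hs : 0 < s)
    (h : ∀ i, |x i - y i| < s) : dist x y < s * Real.sqrt n := by
  rw [EuclideanSpace.dist_eq]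
  have hne : (Finset.univ : Finset (Fin n)).Nonempty := ⟨⟨0, hn⟩, Finset.mem_univ _⟩
  have h1 : ∑ i, dist (x i) (y i) ^ 2 < (n : ℝ) * s ^ 2 := by
    calc ∑ i, dist (x i) (y i) ^ 2 < ∑ _i : Fin n, s ^ 2 := by
          refine Finset.sum_lt_sum_of_nonempty hne fun i _ => ?_
          rw [Real.dist_eq]
          exact sq_lt_sq' (by linarith [abs_nonneg (x i - y i)]) (h i)
      _ = (n : ℝ) * s ^ 2 := by simp [Finset.sum_const, mul_comm]
  calc Real.sqrt (∑ i, dist (x i) (y i) ^ 2) < Real.sqrt ((n : ℝ) * s ^ 2) :=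
        Real.sqrt_lt_sqrt (by positivity) h1
    _ = s * Real.sqrt n := by
        rw [Real.sqrt_mul (by positivity), Real.sqrt_sq hs.le]; ring

lemma spos (hn : 1 ≤ n) {Q : Cube n} {x : EuclideanSpace ℝ (Fin n)}
    (hx : x ∈ Q.set) : 0 < Q.s := by
  have := hx ⟨0, hn⟩; linarith [this.1, this.2]

lemma subset_dilate {Q : Cube n} {a : ℝ} (ha : 1 ≤ a) (hs : 0 ≤ Q.s) :
    Q.set ⊆ (Q.dilate a).set := by
  intro y hy i
  have := hy i
  constructor
  · simp only [Cube.dilate, PiLp.toLp_apply]; nlinarith [this.1]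
  · simp only [Cube.dilate, PiLp.toLp_apply]; nlinarith [this.2]

lemma dilate_subset_closedBall {Q : Cube n} {a : ℝ} (ha : 1 ≤ a) (hs : 0 ≤ Q.s) :
    (Q.dilate a).set ⊆
      Metric.closedBall (WithLp.toLp 2 (fun i => Q.c i + Q.s / 2))
        (a * Q.s / 2 * Real.sqrt n) := by
  intro y hy
  rw [Metric.mem_closedBall]
  refine dist_le_aux (by positivity) fun i => ?_
  have := hy i
  simp only [Cube.dilate, PiLp.toLp_apply] at this ⊢
  rw [abs_le]
  exact ⟨by nlinarith [this.1, this.2], by nlinarith [this.1, this.2]⟩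

lemma subset_ball_of_mem (hn : 1 ≤ n) {Q : Cube n} {x : EuclideanSpace ℝ (Fin n)}
    (hx : x ∈ Q.set) : Q.set ⊆ Metric.ball x (Q.s * Real.sqrt n) := by
  intro y hy
  rw [Metric.mem_ball, dist_comm]
  refine dist_lt_aux hn (spos hn hx) fun i => ?_
  have h1 := hx i; have h2 := hy i
  rw [abs_lt]; constructor <;> [nlinarith [h1.1, h1.2, h2.1, h2.2]; nlinarith [h1.1, h1.2, h2.1, h2.2]]

lemma s_lower (hn : 1 ≤ n) {Q : Cube n} {z : EuclideanSpace ℝ (Fin n)} {ρ : ℝ}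
    (hρ : 0 < ρ) (h : Metric.ball z ρ ⊆ Q.set) : 2 * ρ ≤ Q.s := by
  set i0 : Fin n := ⟨0, hn⟩ with hi0
  have key : ∀ η : ℝ, 0 < η → η < ρ → 2 * η < Q.s := by
    intro η hη1 hη2
    have hd : ∀ v : ℝ,
        dist (WithLp.toLp 2 (Function.update z i0 v)) z = |v - z i0| := by
      intro v
      rw [EuclideanSpace.dist_eq]
      have he : ∀ i : Fin n,
          dist ((WithLp.toLp 2 (Function.update z i0 v)) i) (z i) ^ 2 =
          if i = i0 then |v - z i0| ^ 2 else 0 := by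
        intro i
        by_cases hi : i = i0 <;> simp [Function.update_apply, hi, Real.dist_eq, sq_abs] <;> subst hi <;> rfl
      rw [Finset.sum_congr rfl fun i _ => he i, Finset.sum_ite_eq' Finset.univ i0]
      simp [Real.sqrt_sq_eq_abs]
    have hp : (WithLp.toLp 2 (Function.update z i0 (z i0 + η))) ∈ Q.set := by
      apply h
      rw [Metric.mem_ball, hd]
      rw [show z i0 + η - z i0 = η by ring, abs_of_pos hη1]; exact hη2
    have hm : (WithLp.toLp 2 (Function.update z i0 (z i0 - η))) ∈ Q.set := by
      apply h
      rw [Metric.mem_ball, hd]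
      rw [show z i0 - η - z i0 = -η by ring, abs_neg, abs_of_pos hη1]; exact hη2
    have h1 := (hp i0).2
    have h2 := (hm i0).1
    simp only [PiLp.toLp_apply, Function.update_self] at h1 h2
    linarith
  by_contra hc
  push_neg at hc
  have hs : 0 < Q.s := spos hn (h (Metric.mem_ball_self hρ))
  have := key ((Q.s / 2 + ρ) / 2) (by linarith) (by linarith)
  linarith

lemma bounded (Q : Cube n) : Bornology.IsBounded Q.set := by
  refine (Metric.isBounded_closedBall (x := Q.c) (r := |Q.s| * Real.sqrt n)).subset ?_
  intro y hy
  rw [Metric.mem_closedBall, dist_comm]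
  refine dist_le_aux (abs_nonneg _) fun i => ?_
  have := hy i
  rw [abs_le]
  exact ⟨by nlinarith [this.1, le_abs_self Q.s, neg_abs_le Q.s],
    by nlinarith [this.2, le_abs_self Q.s]⟩

lemma s_upper (hn : 1 ≤ n) {Q : Cube n} {x : EuclideanSpace ℝ (Fin n)} {D : ℝ}
    (hx : x ∈ Q.set) (hD : Metric.diam Q.set ≤ D) : Q.s * Real.sqrt n ≤ D := by
  have hs : 0 < Q.s := spos hn hx
  have hcmem : Q.c ∈ Q.set := fun i => ⟨le_refl _, by linarith⟩
  have key : ∀ t : ℝ, 0 ≤ t → t < Q.s → t * Real.sqrt n ≤ D := by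
    intro t ht1 ht2
    have hmem : (WithLp.toLp 2 (fun i => Q.c i + t)) ∈ Q.set :=
      fun i => ⟨by dsimp; linarith, by dsimp; linarith⟩
    have hb := Metric.dist_le_diam_of_mem (bounded Q) hmem hcmem
    have hdist : dist (WithLp.toLp 2 (fun i => Q.c i + t)) Q.c
        = t * Real.sqrt n := by
      rw [EuclideanSpace.dist_eq]
      have he : ∀ i : Fin n,
          dist ((WithLp.toLp 2 (fun i => Q.c i + t)) i) (Q.c i) ^ 2
          = t ^ 2 := by
        intro i
        rw [Real.dist_eq, show Q.c i + t - Q.c i = t by ring, sq_abs]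
      rw [Finset.sum_congr rfl fun i _ => he i]
      simp only [Finset.sum_const, Finset.card_univ, Fintype.card_fin, nsmul_eq_mul]
      rw [Real.sqrt_mul (by positivity), Real.sqrt_sq ht1]; ring
    rw [hdist] at hb; linarith
  have hD0 : 0 ≤ D := le_trans Metric.diam_nonneg hD
  by_contra hc
  push_neg at hc
  have hsq : (0:ℝ) < Real.sqrt n := Real.sqrt_pos.mpr (by exact_mod_cast Nat.lt_of_lt_of_le Nat.zero_lt_one hn)
  have ht : D / Real.sqrt n < Q.s := (div_lt_iff₀ hsq).mpr hc
  have h0 : 0 ≤ D / Real.sqrt n := by positivity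
  have := key ((D / Real.sqrt n + Q.s) / 2) (by linarith) (by linarith)
  have he : D / Real.sqrt n * Real.sqrt n = D := div_mul_cancel₀ D hsq.ne'
  nlinarith

end CubeAux

set_option maxHeartbeats 1000000

/-- Lemma 1(ii): for a measure `μ` of `k`-dimensional polynomial growth on
`ℝⁿ`, `α > 1` and `β > (c_n α)^k`, every point of `supp μ` lies, for every
`r > 0`, in an `(α,β)`-doubling cube of the family `𝒜` of Theorem A with side
length `> r`. -/
theorem stmt_9 (n : ℕ) (k cμ α β : ℝ) (hk : 0 < k) (hkn : k ≤ n)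
    (hα : 1 < α) (hβ : (cN n * α) ^ k < β)
    (μ : Measure (EuclideanSpace ℝ (Fin n)))
    (hgrowth : ∀ (x : EuclideanSpace ℝ (Fin n)) (r : ℝ), 0 < r →
      μ (Metric.ball x r) ≤ ENNReal.ofReal (cμ * r ^ k))
    (𝒜 : Fin (n + 1) → Set (Cube n))
    (hfil : ∀ m, IsDyadicFiltration (𝒜 m))
    (hcov : ∀ (x : EuclideanSpace ℝ (Fin n)) (r : ℝ), 0 < r →
      ∃ m, ∃ Q ∈ 𝒜 m, Metric.ball x r ⊆ Q.set ∧
        Metric.diam Q.set ≤ cN n * (2 * r))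
    (x : EuclideanSpace ℝ (Fin n))
    (hx : ∀ r : ℝ, 0 < r → 0 < μ (Metric.ball x r)) (r : ℝ) (hr : 0 < r) :
    ∃ m, ∃ Q ∈ 𝒜 m, x ∈ Q.set ∧ r < Q.s ∧
      μ (Q.dilate α).set ≤ ENNReal.ofReal β * μ Q.set := by
  classical
  by_contra hcon
  push_neg at hcon
  -- basic constants
  have hnR : (0:ℝ) < n := lt_of_lt_of_le hk hkn
  have hn1 : 1 ≤ n := Nat.cast_pos.mp hnR
  have hsq0 : (0:ℝ) < Real.sqrt n := Real.sqrt_pos.mpr hnR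
  have hsq1 : (1:ℝ) ≤ Real.sqrt n := by
    rw [show (1:ℝ) = Real.sqrt 1 by simp]
    exact Real.sqrt_le_sqrt (by exact_mod_cast hn1)
  have hpn : (1:ℝ) ≤ pn n := by
    have : 1 ≤ pn n := by unfold pn; split <;> omega
    exact_mod_cast this
  have hcN1 : 1 ≤ cN n := by unfold cN; nlinarith
  have hcα1 : 1 < cN n * α := by nlinarith
  have hcα0 : 0 < cN n * α := by linarith
  have hβ0 : 0 < β := lt_trans (Real.rpow_pos_of_pos hcα0 k) hβ
  -- the dilation factor γ with (cN n * α) < γ and γ ^ k < β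
  set lam : ℝ := (β / (cN n * α) ^ k) ^ k⁻¹ with hlamdef
  have hbase : 1 < β / (cN n * α) ^ k :=
    (one_lt_div (Real.rpow_pos_of_pos hcα0 k)).mpr hβ
  have hlam1 : 1 < lam := by
    rw [hlamdef]
    exact (Real.one_lt_rpow_iff_of_pos (by linarith)).mpr
      (Or.inl ⟨hbase, by positivity⟩)
  set θ : ℝ := (1 + lam) / 2 with hθdef
  have hθ1 : 1 < θ := by rw [hθdef]; linarith
  have hθlam : θ < lam := by rw [hθdef]; linarith
  set γ : ℝ := cN n * α * θ with hγdef
  have hγ1 : 1 < γ := by nlinarith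
  have hγ0 : 0 < γ := by linarith
  have hγk : γ ^ k < β := by
    have h1 : γ ^ k < (cN n * α * lam) ^ k :=
      Real.rpow_lt_rpow (by positivity) (by nlinarith) hk
    have h2 : (cN n * α * lam) ^ k = (cN n * α) ^ k * lam ^ k :=
      Real.mul_rpow (by positivity) (by positivity)
    have h3 : lam ^ k = β / (cN n * α) ^ k :=
      Real.rpow_inv_rpow (by positivity) hk.ne'
    rw [h2, h3, mul_div_cancel₀ _ (Real.rpow_pos_of_pos hcα0 k).ne'] at h1
    exact h1
  -- the starting ball
  have hμb0 : 0 < μ (Metric.ball x r) := hx r hr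
  have hμbfin : μ (Metric.ball x r) ≤ ENNReal.ofReal (cμ * r ^ k) := hgrowth x r hr
  have hμbne : μ (Metric.ball x r) ≠ ⊤ := ne_top_of_le_ne_top ENNReal.ofReal_ne_top hμbfin
  have hcμ0 : 0 < cμ := by
    by_contra h
    push_neg at h
    have hrk : 0 < r ^ k := Real.rpow_pos_of_pos hr k
    have : cμ * r ^ k ≤ 0 := mul_nonpos_of_nonpos_of_nonneg h hrk.le
    rw [ENNReal.ofReal_eq_zero.mpr this] at hμbfin
    exact absurd (le_antisymm hμbfin zero_le) hμb0.ne'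
  -- the key iteration
  have key : ∀ N : ℕ, ∃ (m : Fin (n+1)) (Q : Cube n), Q ∈ 𝒜 m ∧ x ∈ Q.set ∧
      r < Q.s ∧ Q.s ≤ γ ^ N * (2 * cN n * r) ∧
      ENNReal.ofReal β ^ N * μ (Metric.ball x r) ≤ μ Q.set := by
    intro N
    induction N with
    | zero =>
      obtain ⟨m, Q, hQA, hball, hdiam⟩ := hcov x r hr
      have hxQ : x ∈ Q.set := hball (Metric.mem_ball_self hr)
      have hsl := CubeAux.s_lower hn1 hr hball
      have hsu := CubeAux.s_upper hn1 hxQ hdiam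
      refine ⟨m, Q, hQA, hxQ, by linarith, ?_, ?_⟩
      · rw [pow_zero, one_mul]; nlinarith
      · rw [pow_zero, one_mul]; exact measure_mono hball
    | succ N ih =>
      obtain ⟨m, Q, hQA, hxQ, hrQ, hsle, hμ⟩ := ih
      have hspos : 0 < Q.s := lt_trans hr hrQ
      set z : EuclideanSpace ℝ (Fin n) :=
        (WithLp.toLp 2 (fun i => Q.c i + Q.s / 2)) with hzdef
      set ρ : ℝ := θ * (α * Q.s * Real.sqrt n / 2) with hρdef
      have hρ0 : 0 < ρ := by rw [hρdef]; positivity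
      obtain ⟨m', Q', hQ'A, hball', hdiam'⟩ := hcov z ρ hρ0
      have hsubd : (Q.dilate α).set ⊆ Q'.set := by
        refine subset_trans (CubeAux.dilate_subset_closedBall hα.le hspos.le) ?_
        refine subset_trans (Metric.closedBall_subset_ball ?_) hball'
        rw [hρdef]; nlinarith
      have hxQ' : x ∈ Q'.set := hsubd (CubeAux.subset_dilate hα.le hspos.le hxQ)
      have hsl := CubeAux.s_lower hn1 hρ0 hball'
      have hsu := CubeAux.s_upper hn1 hxQ' hdiam'
      have hstep : Q.s < 2 * ρ := by
        rw [hρdef]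
        have h1 : (1:ℝ) < θ * α * Real.sqrt n := by nlinarith
        nlinarith [mul_lt_mul_of_pos_right h1 hspos]
      refine ⟨m', Q', hQ'A, hxQ', by linarith, ?_, ?_⟩
      · -- Q'.s ≤ γ ^ (N+1) * (2 * cN n * r)
        have hQ'γ : Q'.s ≤ γ * Q.s := by
          rw [hγdef]
          have : Q'.s * Real.sqrt n ≤ cN n * α * θ * Q.s * Real.sqrt n := by
            rw [hρdef] at hsu; nlinarith
          nlinarith
        calc Q'.s ≤ γ * Q.s := hQ'γ
          _ ≤ γ * (γ ^ N * (2 * cN n * r)) := by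
              exact mul_le_mul_of_nonneg_left hsle hγ0.le
          _ = γ ^ (N+1) * (2 * cN n * r) := by ring
      · have hnd := hcon m Q hQA hxQ hrQ
        calc ENNReal.ofReal β ^ (N+1) * μ (Metric.ball x r)
            = ENNReal.ofReal β * (ENNReal.ofReal β ^ N * μ (Metric.ball x r)) := by
              rw [pow_succ]; ring
          _ ≤ ENNReal.ofReal β * μ Q.set := mul_le_mul_right hμ _
          _ ≤ μ (Q.dilate α).set := hnd.le
          _ ≤ μ Q'.set := measure_mono hsubd
  -- the contradiction
  set d : ℝ := γ ^ k with hddef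
  have hd0 : 0 < d := Real.rpow_pos_of_pos hγ0 k
  have hrat : 1 < β / d := (one_lt_div hd0).mpr hγk
  set A : ℝ := cμ * (2 * cN n * r * Real.sqrt n) ^ k with hAdef
  have hA0 : 0 < A := by
    rw [hAdef]
    have : (0:ℝ) < 2 * cN n * r * Real.sqrt n := by positivity
    positivity
  set m0 : ℝ := (μ (Metric.ball x r)).toReal with hm0def
  have hm00 : 0 < m0 := ENNReal.toReal_pos hμb0.ne' hμbne
  obtain ⟨N, hN⟩ := pow_unbounded_of_one_lt (A / m0) hrat
  obtain ⟨m, Q, hQA, hxQ, hrQ, hsle, hμ⟩ := key N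
  have hspos : 0 < Q.s := lt_trans hr hrQ
  have h1 : μ Q.set ≤ ENNReal.ofReal (cμ * (Q.s * Real.sqrt n) ^ k) :=
    (measure_mono (CubeAux.subset_ball_of_mem hn1 hxQ)).trans
      (hgrowth x _ (by positivity))
  have hpowk : (γ ^ N : ℝ) ^ k = d ^ N := by
    rw [hddef, ← Real.rpow_natCast γ N, ← Real.rpow_natCast (γ ^ k) N,
      ← Real.rpow_mul hγ0.le, ← Real.rpow_mul hγ0.le, mul_comm]
  have h4 : cμ * (Q.s * Real.sqrt n) ^ k ≤ A * d ^ N := by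
    have hb1 : Q.s * Real.sqrt n ≤ γ ^ N * (2 * cN n * r * Real.sqrt n) := by
      have := mul_le_mul_of_nonneg_right hsle hsq0.le
      nlinarith
    have hb2 : (Q.s * Real.sqrt n) ^ k ≤ (γ ^ N * (2 * cN n * r * Real.sqrt n)) ^ k :=
      Real.rpow_le_rpow (by positivity) hb1 hk.le
    have hb3 : (γ ^ N * (2 * cN n * r * Real.sqrt n)) ^ k
        = d ^ N * (2 * cN n * r * Real.sqrt n) ^ k := by
      rw [Real.mul_rpow (by positivity) (by positivity), hpowk]
    calc cμ * (Q.s * Real.sqrt n) ^ k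
        ≤ cμ * (d ^ N * (2 * cN n * r * Real.sqrt n) ^ k) := by
          rw [← hb3]; exact mul_le_mul_of_nonneg_left hb2 hcμ0.le
      _ = A * d ^ N := by rw [hAdef]; ring
  have hmain : ENNReal.ofReal (β ^ N * m0) ≤ ENNReal.ofReal (A * d ^ N) := by
    calc ENNReal.ofReal (β ^ N * m0)
        = ENNReal.ofReal (β ^ N) * ENNReal.ofReal m0 :=
          ENNReal.ofReal_mul (by positivity)
      _ = ENNReal.ofReal β ^ N * ENNReal.ofReal m0 := by
          rw [ENNReal.ofReal_pow hβ0.le]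
      _ ≤ ENNReal.ofReal β ^ N * μ (Metric.ball x r) :=
          mul_le_mul_right ENNReal.ofReal_toReal_le _
      _ ≤ μ Q.set := hμ
      _ ≤ ENNReal.ofReal (cμ * (Q.s * Real.sqrt n) ^ k) := h1
      _ ≤ ENNReal.ofReal (A * d ^ N) := ENNReal.ofReal_le_ofReal h4
  have hreal : β ^ N * m0 ≤ A * d ^ N :=
    (ENNReal.ofReal_le_ofReal_iff (by positivity)).mp hmain
  rw [div_pow, div_lt_div_iff₀ hm00 (pow_pos hd0 N)] at hN
  linarith
end

section
/- Let mu be a Borel measure on R^n and let A be the union of the n+1 dyadic filtrations from Theorem A with covering constant c_n. If beta > (c_n * alpha)^n with alpha > 1, then for mu-almost every x in R^n there is a sequence of (alpha, beta)-doubling cubes Q_j in A with x in Q_j and l(Q_j) < 2^{-j} for all j. -/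
open MeasureTheory

namespace Cube
variable {n : ℕ}

noncomputable def center (Q : Cube n) : EuclideanSpace ℝ (Fin n) :=
  WithLp.toLp 2 (fun i => Q.c i + Q.s / 2)

lemma center_apply (Q : Cube n) (i : Fin n) : Q.center i = Q.c i + Q.s / 2 := rfl

lemma dist_center_le {Q : Cube n} (hs : 0 ≤ Q.s) {y : EuclideanSpace ℝ (Fin n)}
    (hy : y ∈ Q.set) : dist y Q.center ≤ Q.s * Real.sqrt n / 2 := by
  rw [EuclideanSpace.dist_eq]
  have h1 : ∑ i : Fin n, dist (y i) (Q.center i) ^ 2 ≤ (n : ℝ) * (Q.s / 2) ^ 2 := by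
    have hle : ∀ i ∈ Finset.univ, dist (y i) (Q.center i) ^ 2 ≤ (Q.s / 2) ^ 2 := by
      intro i _
      have h := hy i
      rw [Real.dist_eq, center_apply, sq_abs]
      apply sq_le_sq'
      · linarith [h.1, h.2]
      · linarith [h.1, h.2]
    calc ∑ i : Fin n, dist (y i) (Q.center i) ^ 2 ≤ ∑ _i : Fin n, (Q.s / 2) ^ 2 :=
          Finset.sum_le_sum hle
      _ = (n : ℝ) * (Q.s / 2) ^ 2 := by
          rw [Finset.sum_const, Finset.card_univ, Fintype.card_fin, nsmul_eq_mul]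
  calc Real.sqrt (∑ i : Fin n, dist (y i) (Q.center i) ^ 2)
      ≤ Real.sqrt ((n : ℝ) * (Q.s / 2) ^ 2) := Real.sqrt_le_sqrt h1
    _ = Real.sqrt n * (Q.s / 2) := by
        rw [Real.sqrt_mul (by positivity), Real.sqrt_sq (by positivity)]
    _ = Q.s * Real.sqrt n / 2 := by ring

lemma set_subset_closedBall {Q : Cube n} (hs : 0 ≤ Q.s) :
    Q.set ⊆ Metric.closedBall Q.center (Q.s * Real.sqrt n / 2) :=
  fun _ hy => Metric.mem_closedBall.2 (dist_center_le hs hy)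

lemma isBounded {Q : Cube n} (hs : 0 ≤ Q.s) : Bornology.IsBounded Q.set :=
  Metric.isBounded_closedBall.subset (set_subset_closedBall hs)

lemma diam_le {Q : Cube n} (hs : 0 ≤ Q.s) : Metric.diam Q.set ≤ Q.s * Real.sqrt n := by
  apply Metric.diam_le_of_forall_dist_le (by positivity)
  intro x hx y hy
  calc dist x y ≤ dist x Q.center + dist y Q.center := dist_triangle_right _ _ _
    _ ≤ Q.s * Real.sqrt n / 2 + Q.s * Real.sqrt n / 2 :=
        add_le_add (dist_center_le hs hx) (dist_center_le hs hy)
    _ = Q.s * Real.sqrt n := by ring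

lemma le_diam {Q : Cube n} (hs : 0 < Q.s) :
    Q.s * Real.sqrt n ≤ Metric.diam Q.set := by
  apply le_of_forall_pos_le_add
  intro δ hδ
  set ε : ℝ := min (Q.s / 2) (δ / (Real.sqrt n + 1)) with hεdef
  have hsqn : (0:ℝ) ≤ Real.sqrt n := Real.sqrt_nonneg n
  have hε0 : 0 < ε := lt_min (by linarith) (by positivity)
  have hε1 : ε ≤ Q.s / 2 := min_le_left _ _
  have hεs : ε < Q.s := by linarith
  have hx : Q.c ∈ Q.set := fun i => ⟨le_refl _, by linarith⟩
  have hy : (WithLp.toLp 2 (fun i => Q.c i + (Q.s - ε)) : EuclideanSpace ℝ (Fin n)) ∈ Q.set := by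
    intro i
    constructor
    · show Q.c i ≤ Q.c i + (Q.s - ε); linarith
    · show Q.c i + (Q.s - ε) < Q.c i + Q.s; linarith
  have hdist : dist Q.c (WithLp.toLp 2 (fun i => Q.c i + (Q.s - ε)) : EuclideanSpace ℝ (Fin n))
      = (Q.s - ε) * Real.sqrt n := by
    rw [EuclideanSpace.dist_eq]
    have heq : ∀ i ∈ Finset.univ,
        dist (Q.c i) ((WithLp.toLp 2 (fun i => Q.c i + (Q.s - ε)) : EuclideanSpace ℝ (Fin n)) i) ^ 2
          = (Q.s - ε) ^ 2 := by
      intro i _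
      have : dist (Q.c i) (Q.c i + (Q.s - ε)) = |Q.c i - (Q.c i + (Q.s - ε))| := Real.dist_eq _ _
      rw [this, abs_of_nonpos (by linarith)]
      ring
    rw [Finset.sum_congr rfl heq, Finset.sum_const, Finset.card_univ, Fintype.card_fin,
      nsmul_eq_mul, Real.sqrt_mul (by positivity), Real.sqrt_sq (by linarith)]
    ring
  have hd := Metric.dist_le_diam_of_mem (isBounded hs.le) hx hy
  rw [hdist] at hd
  have hεb : ε * Real.sqrt n ≤ δ := by
    have h1 : ε ≤ δ / (Real.sqrt n + 1) := min_le_right _ _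
    have h2 : ε * Real.sqrt n ≤ (δ / (Real.sqrt n + 1)) * Real.sqrt n :=
      mul_le_mul_of_nonneg_right h1 hsqn
    have h3 : (δ / (Real.sqrt n + 1)) * Real.sqrt n ≤ δ := by
      rw [div_mul_eq_mul_div, div_le_iff₀ (by linarith)]
      nlinarith
    linarith
  nlinarith [hd]

lemma dilate_s (Q : Cube n) (t : ℝ) : (Q.dilate t).s = t * Q.s := rfl

lemma center_dilate (Q : Cube n) (t : ℝ) : (Q.dilate t).center = Q.center := by
  ext i
  show Q.c i - (t - 1) * Q.s / 2 + t * Q.s / 2 = Q.c i + Q.s / 2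
  ring

lemma subset_dilate {Q : Cube n} (hs : 0 ≤ Q.s) {t : ℝ} (ht : 1 ≤ t) :
    Q.set ⊆ (Q.dilate t).set := by
  intro y hy i
  have h := hy i
  have h1 : 0 ≤ (t - 1) * Q.s := mul_nonneg (by linarith) hs
  constructor
  · show Q.c i - (t - 1) * Q.s / 2 ≤ y i
    linarith [h.1]
  · show y i < Q.c i - (t - 1) * Q.s / 2 + t * Q.s
    nlinarith [h.2]

lemma dilate_subset_closedBall {Q : Cube n} {t : ℝ} (hts : 0 ≤ t * Q.s) :
    (Q.dilate t).set ⊆ Metric.closedBall Q.center (t * Q.s * Real.sqrt n / 2) := by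
  have := set_subset_closedBall (Q := Q.dilate t) (by rw [dilate_s]; exact hts)
  rwa [center_dilate, dilate_s] at this

lemma coord_dist_le {y z : EuclideanSpace ℝ (Fin n)} (i : Fin n) :
    dist (y i) (z i) ≤ dist y z := by
  rw [EuclideanSpace.dist_eq]
  have h1 : dist (y i) (z i) ^ 2 ≤ ∑ j : Fin n, dist (y j) (z j) ^ 2 :=
    Finset.single_le_sum (f := fun j => dist (y j) (z j) ^ 2) (fun j _ => sq_nonneg _)
      (Finset.mem_univ i)
  calc dist (y i) (z i) = Real.sqrt (dist (y i) (z i) ^ 2) :=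
        (Real.sqrt_sq dist_nonneg).symm
    _ ≤ _ := Real.sqrt_le_sqrt h1

lemma ball_subset_set {Q : Cube n} :
    Metric.ball Q.center (Q.s / 2) ⊆ Q.set := by
  intro y hy i
  have h := lt_of_le_of_lt (coord_dist_le (y := y) (z := Q.center) i) (Metric.mem_ball.1 hy)
  rw [Real.dist_eq, center_apply, abs_lt] at h
  constructor <;> [linarith [h.1]; linarith [h.2]]

lemma set_eq_preimage (Q : Cube n) : Q.set = (MeasurableEquiv.toLp 2 (Fin n → ℝ)).symm ⁻¹'
    (Set.univ.pi fun i => Set.Ico (Q.c i) (Q.c i + Q.s)) := by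
  ext y
  simp [Cube.set, Set.mem_pi]

lemma measurableSet_set (Q : Cube n) : MeasurableSet Q.set := by
  rw [set_eq_preimage]
  exact (MeasurableEquiv.toLp 2 (Fin n → ℝ)).symm.measurable
    (MeasurableSet.univ_pi fun i => measurableSet_Ico)

lemma volume_set (Q : Cube n) : volume Q.set = ENNReal.ofReal Q.s ^ n := by
  rw [set_eq_preimage, (EuclideanSpace.volume_preserving_symm_measurableEquiv_toLp (Fin n)).measure_preimage
    (MeasurableSet.univ_pi fun i => measurableSet_Ico).nullMeasurableSet, volume_pi_pi]
  simp [Real.volume_Ico]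

end Cube

lemma pn_pos (n : ℕ) : 0 < pn n := by unfold pn; split <;> omega

lemma cN_pos {n : ℕ} (hn : 0 < n) : 0 < cN n := by
  have h1 : (0:ℝ) < pn n := by exact_mod_cast pn_pos n
  have h2 : (0:ℝ) < Real.sqrt n := Real.sqrt_pos.mpr (by exact_mod_cast hn)
  unfold cN; positivity

lemma two_le_cN {n : ℕ} (hn : 0 < n) : 2 ≤ cN n := by
  have h1 : (1:ℝ) ≤ pn n := by exact_mod_cast pn_pos n
  have h2 : (1:ℝ) ≤ Real.sqrt n := by
    rw [show (1:ℝ) = Real.sqrt 1 by simp]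
    exact Real.sqrt_le_sqrt (by exact_mod_cast hn)
  unfold cN; nlinarith

lemma cube_packing {n : ℕ} {𝒮 : Set (Cube n)} {s₀ : ℝ} (hs₀ : 0 < s₀)
    (hside : ∀ Q ∈ 𝒮, Q.s = s₀)
    (hdisj : 𝒮.Pairwise fun Q Q' => Disjoint Q.set Q'.set)
    {W : Set (EuclideanSpace ℝ (Fin n))} (hW : ∀ Q ∈ 𝒮, Q.set ⊆ W)
    (hWvol : volume W ≠ ⊤) :
    𝒮.Finite ∧ ∀ F : Finset (Cube n), ↑F ⊆ 𝒮 →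
      (F.card : ENNReal) * ENNReal.ofReal s₀ ^ n ≤ volume W := by
  have hcard : ∀ F : Finset (Cube n), ↑F ⊆ 𝒮 →
      (F.card : ENNReal) * ENNReal.ofReal s₀ ^ n ≤ volume W := by
    intro F hF
    have hpd : (↑F : Set (Cube n)).PairwiseDisjoint Cube.set :=
      fun Q hQ Q' hQ' hne => hdisj (hF hQ) (hF hQ') hne
    have h1 : volume (⋃ Q ∈ F, Cube.set Q) = ∑ Q ∈ F, volume Q.set :=
      measure_biUnion_finset hpd (fun Q _ => Q.measurableSet_set)
    have h2 : ∑ Q ∈ F, volume Q.set = (F.card : ENNReal) * ENNReal.ofReal s₀ ^ n := by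
      rw [Finset.sum_congr rfl (fun Q hQ => by
        rw [Cube.volume_set, hside Q (hF hQ)])]
      rw [Finset.sum_const, nsmul_eq_mul]
    rw [← h2, ← h1]
    exact measure_mono (Set.iUnion₂_subset fun Q hQ => hW Q (hF hQ))
  refine ⟨?_, hcard⟩
  by_contra hinf
  have hinf' : Set.Infinite 𝒮 := hinf
  have hv : (ENNReal.ofReal s₀ ^ n) ≠ 0 := pow_ne_zero _ (ENNReal.ofReal_pos.mpr hs₀).ne'
  obtain ⟨m, hm⟩ := ENNReal.exists_nat_mul_gt hv hWvol
  obtain ⟨F, hF, hFcard⟩ := hinf'.exists_subset_card_eq m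
  have h := hcard F hF
  rw [hFcard] at h
  exact hm.not_ge h

lemma filtration_disjoint {n : ℕ} {F : Set (Cube n)} (hfil : IsDyadicFiltration F)
    {k : ℤ} {Q Q' : Cube n} (hQ : Q ∈ F) (hQ' : Q' ∈ F)
    (hs : Q.s = (2:ℝ)^(-k)) (hs' : Q'.s = (2:ℝ)^(-k)) (hne : Q ≠ Q') :
    Disjoint Q.set Q'.set := by
  rw [Set.disjoint_left]
  intro x hx hx'
  obtain ⟨U, _, hUuniq⟩ := hfil.2.1 k x
  exact hne ((hUuniq Q ⟨hQ, hs, hx⟩).trans (hUuniq Q' ⟨hQ', hs', hx'⟩).symm)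

lemma chain_lemma {n : ℕ} (hn : 0 < n) {α β G : ℝ} (hα : 1 < α)
    (hG : cN n * α < G)
    (μ : Measure (EuclideanSpace ℝ (Fin n))) (𝒜 : Fin (n + 1) → Set (Cube n))
    (hfil : ∀ m, IsDyadicFiltration (𝒜 m))
    (hcov : ∀ (x : EuclideanSpace ℝ (Fin n)) (r : ℝ), 0 < r →
      ∃ m, ∃ Q ∈ 𝒜 m, Metric.ball x r ⊆ Q.set ∧ Metric.diam Q.set ≤ cN n * (2 * r))
    (j : ℕ) (x : EuclideanSpace ℝ (Fin n))
    (hx : ∀ m, ∀ Q ∈ 𝒜 m, x ∈ Q.set → Q.s < (2:ℝ) ^ (-(j:ℤ)) →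
      ¬ (μ (Q.dilate α).set ≤ ENNReal.ofReal β * μ Q.set)) :
    ∀ (d : ℕ) (k : ℤ), k ≤ (j:ℤ) + d → (j:ℤ) < k →
      ∀ (m : Fin (n + 1)) (Q : Cube n), Q ∈ 𝒜 m → x ∈ Q.set → Q.s = (2:ℝ)^(-k) →
      ∃ (K : ℕ) (m' : Fin (n + 1)) (T : Cube n), 1 ≤ K ∧ T ∈ 𝒜 m' ∧ x ∈ T.set ∧
        Q.set ⊆ T.set ∧ T.s < (2:ℝ)^(-(j:ℤ)) ∧ (2:ℝ)^(-(j:ℤ)) ≤ G * T.s ∧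
        (2:ℝ)^(-(j:ℤ)) ≤ G ^ K * Q.s ∧
        ENNReal.ofReal β ^ K * μ Q.set ≤ ENNReal.ofReal β * μ T.set := by
  intro d
  induction d with
  | zero =>
    intro k hkd hjk
    exact absurd hjk (by omega)
  | succ d ih =>
    intro k hkd hjk m Q hQm hxQ hQs
    have hsqn : (0:ℝ) < Real.sqrt n := Real.sqrt_pos.mpr (by exact_mod_cast hn)
    have hcN : 0 < cN n := cN_pos hn
    have hα0 : (0:ℝ) < α := by linarith
    have hG0 : (0:ℝ) < G := lt_trans (by positivity) hG
    have hs : 0 < Q.s := hQs ▸ zpow_pos two_pos _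
    have hsj : Q.s < (2:ℝ)^(-(j:ℤ)) := by
      rw [hQs]; exact zpow_lt_zpow_right₀ one_lt_two (by omega)
    have hnd : ENNReal.ofReal β * μ Q.set ≤ μ (Q.dilate α).set :=
      le_of_lt (not_le.mp (hx m Q hQm hxQ hsj))
    set r := G * Q.s * Real.sqrt n / (2 * cN n) with hrdef
    have hr0 : 0 < r := by positivity
    obtain ⟨m', Q', hQ'm, hball, hdiam⟩ := hcov Q.center r hr0
    obtain ⟨k', hk's⟩ := (hfil m').1 Q' hQ'm
    have hs' : 0 < Q'.s := hk's ▸ zpow_pos two_pos _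
    have hsub : (Q.dilate α).set ⊆ Q'.set := by
      refine (Cube.dilate_subset_closedBall (by positivity)).trans
        ((Metric.closedBall_subset_ball ?_).trans hball)
      rw [hrdef, div_lt_div_iff₀ (by norm_num) (by positivity)]
      have hcore : cN n * α < G := hG
      nlinarith [mul_pos hs hsqn]
    have hxQ' : x ∈ Q'.set := hsub (Cube.subset_dilate hs.le hα.le hxQ)
    have hupper : Q'.s ≤ G * Q.s := by
      have h1 := Cube.le_diam hs'
      have h2 : Metric.diam Q'.set ≤ G * Q.s * Real.sqrt n := by
        calc Metric.diam Q'.set ≤ cN n * (2 * r) := hdiam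
          _ = G * Q.s * Real.sqrt n := by rw [hrdef]; field_simp
      exact le_of_mul_le_mul_right (by nlinarith) hsqn
    have hlower : α * Q.s ≤ Q'.s := by
      have h1 : α * Q.s * Real.sqrt n ≤ Metric.diam (Q.dilate α).set := by
        have h := Cube.le_diam (Q := Q.dilate α) (by rw [Cube.dilate_s]; positivity)
        rwa [Cube.dilate_s] at h
      have h2 : Metric.diam (Q.dilate α).set ≤ Metric.diam Q'.set :=
        Metric.diam_mono hsub (Cube.isBounded hs'.le)
      have h3 := Cube.diam_le hs'.le
      exact le_of_mul_le_mul_right (by nlinarith) hsqn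
    have hμ' : μ (Q.dilate α).set ≤ μ Q'.set := measure_mono hsub
    by_cases hk'j : k' ≤ (j:ℤ)
    · refine ⟨1, m, Q, le_refl 1, hQm, hxQ, subset_rfl, hsj, ?_, ?_, ?_⟩
      · have h1 : (2:ℝ)^(-(j:ℤ)) ≤ (2:ℝ)^(-k') := zpow_le_zpow_right₀ one_le_two (by omega)
        rw [← hk's] at h1
        linarith [hupper]
      · have h1 : (2:ℝ)^(-(j:ℤ)) ≤ (2:ℝ)^(-k') := zpow_le_zpow_right₀ one_le_two (by omega)
        rw [← hk's] at h1
        rw [pow_one]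
        linarith [hupper]
      · rw [pow_one]
    · push_neg at hk'j
      have hs'j : Q'.s < (2:ℝ)^(-(j:ℤ)) := by
        rw [hk's]; exact zpow_lt_zpow_right₀ one_lt_two (by omega)
      have hk'k : k' < k := by
        have h1 : Q.s < Q'.s := lt_of_lt_of_le (by nlinarith) hlower
        rw [hQs, hk's] at h1
        have := (zpow_lt_zpow_iff_right₀ (one_lt_two (α := ℝ))).mp h1
        omega
      obtain ⟨K', m'', T, hK', hT, hxT, hsubT, hTj, hTG, hGK, hμT⟩ :=
        ih k' (by omega) hk'j m' Q' hQ'm hxQ' hk's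
      refine ⟨K' + 1, m'', T, le_add_self.trans (le_refl _), hT, hxT,
        ((Cube.subset_dilate hs.le hα.le).trans hsub).trans hsubT, hTj, hTG, ?_, ?_⟩
      · calc (2:ℝ)^(-(j:ℤ)) ≤ G ^ K' * Q'.s := hGK
          _ ≤ G ^ K' * (G * Q.s) := mul_le_mul_of_nonneg_left hupper (by positivity)
          _ = G ^ (K' + 1) * Q.s := by ring
      · calc ENNReal.ofReal β ^ (K' + 1) * μ Q.set
            = ENNReal.ofReal β ^ K' * (ENNReal.ofReal β * μ Q.set) := by ring
          _ ≤ ENNReal.ofReal β ^ K' * μ (Q.dilate α).set := mul_le_mul_right hnd _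
          _ ≤ ENNReal.ofReal β ^ K' * μ Q'.set := mul_le_mul_right hμ' _
          _ ≤ ENNReal.ofReal β * μ T.set := hμT
lemma filtration_cover {n : ℕ} {F : Set (Cube n)} (hfil : IsDyadicFiltration F) (k : ℤ) :
    ∃ 𝒬 : Set (Cube n), 𝒬.Countable ∧ (∀ Q ∈ 𝒬, Q ∈ F ∧ Q.s = (2:ℝ)^(-k)) ∧
      (⋃ Q ∈ 𝒬, Q.set) = Set.univ := by
  obtain ⟨D, hDc, hDd⟩ := TopologicalSpace.exists_countable_dense (EuclideanSpace ℝ (Fin n))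
  have hex : ∀ q : EuclideanSpace ℝ (Fin n),
      ∃ Q : Cube n, Q ∈ F ∧ Q.s = (2:ℝ)^(-k) ∧ q ∈ Q.set := fun q => (hfil.2.1 k q).exists
  choose f hf1 hf2 hf3 using hex
  refine ⟨f '' D, hDc.image f, ?_, ?_⟩
  · rintro Q ⟨q, hq, rfl⟩; exact ⟨hf1 q, hf2 q⟩
  · apply Set.eq_univ_of_forall
    intro x
    have hs0 : 0 < (f x).s := hf2 x ▸ zpow_pos two_pos _
    obtain ⟨q, hqD, hq⟩ := hDd.exists_mem_open Metric.isOpen_ball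
      ⟨(f x).center, Metric.mem_ball_self (by linarith : 0 < (f x).s / 2)⟩
    have hqQ : q ∈ (f x).set := Cube.ball_subset_set hq
    have heq : f q = f x := by
      obtain ⟨U, hU, hUuniq⟩ := hfil.2.1 k q
      rw [hUuniq (f q) ⟨hf1 q, hf2 q, hf3 q⟩, hUuniq (f x) ⟨hf1 x, hf2 x, hqQ⟩]
    refine Set.mem_biUnion (Set.mem_image_of_mem f hqD) ?_
    rw [heq]; exact hf3 x

lemma core_estimate {n : ℕ} (hn : 0 < n) {α β G : ℝ} (hα : 1 < α) (hβ0 : 0 < β)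
    (hG : cN n * α < G) (hG0 : 0 < G) (hρ1 : 1 < β / G ^ n)
    {a : ℕ} (ha1 : 1 ≤ a) (haG : G ≤ 2 ^ a)
    (μ : Measure (EuclideanSpace ℝ (Fin n))) (𝒜 : Fin (n + 1) → Set (Cube n))
    (hfil : ∀ m, IsDyadicFiltration (𝒜 m))
    (hcov : ∀ (x : EuclideanSpace ℝ (Fin n)) (r : ℝ), 0 < r →
      ∃ m, ∃ Q ∈ 𝒜 m, Metric.ball x r ⊆ Q.set ∧ Metric.diam Q.set ≤ cN n * (2 * r))
    (j : ℕ) (Bad : Set (EuclideanSpace ℝ (Fin n)))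
    (hBad : ∀ x ∈ Bad, ∀ m, ∀ Q ∈ 𝒜 m, x ∈ Q.set → Q.s < (2:ℝ) ^ (-(j:ℤ)) →
      ¬ (μ (Q.dilate α).set ≤ ENNReal.ofReal β * μ Q.set))
    (R : Cube n) (hRs : R.s = (2:ℝ)^(-(j:ℤ))) :
    μ (Bad ∩ R.set) = 0 := by
  have hsqn : (0:ℝ) < Real.sqrt n := Real.sqrt_pos.mpr (by exact_mod_cast hn)
  set β' := ENNReal.ofReal β with hβ'def
  set ρ' := ENNReal.ofReal (β / G ^ n) with hρ'def
  have hβ'0 : β' ≠ 0 := (ENNReal.ofReal_pos.mpr hβ0).ne'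
  have hρ'1 : 1 < ρ' := ENNReal.one_lt_ofReal.mpr hρ1
  have hρ'0 : ρ' ≠ 0 := by intro h; rw [h] at hρ'1; exact (not_lt.2 zero_le) hρ'1
  have hρ'top : ρ' ≠ ⊤ := ENNReal.ofReal_ne_top
  have hRpos : 0 < R.s := hRs ▸ zpow_pos two_pos _
  -- terminal cube collection
  set 𝒯 : Set (Cube n) := {T | (∃ m, T ∈ 𝒜 m) ∧ T.s < (2:ℝ)^(-(j:ℤ)) ∧
    (2:ℝ)^(-(j:ℤ)) ≤ G * T.s ∧ (T.set ∩ (Bad ∩ R.set)).Nonempty} with h𝒯def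
  have hWb : ∀ T ∈ 𝒯, T.set ⊆
      Metric.closedBall R.c ((2:ℝ)^(-(j:ℤ)) * Real.sqrt n * 2) := by
    rintro T ⟨⟨m, hTm⟩, hTs, hTG, ⟨y, hyT, hyBR⟩⟩ z hz
    obtain ⟨kT, hkT⟩ := (hfil m).1 T hTm
    have hTpos : 0 < T.s := hkT ▸ zpow_pos two_pos _
    have h1 : dist z y ≤ T.s * Real.sqrt n :=
      le_trans (Metric.dist_le_diam_of_mem (Cube.isBounded hTpos.le) hz hyT)
        (Cube.diam_le hTpos.le)
    have hRc : R.c ∈ R.set := fun i => ⟨le_refl _, by linarith⟩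
    have h2 : dist y R.c ≤ R.s * Real.sqrt n :=
      le_trans (Metric.dist_le_diam_of_mem (Cube.isBounded hRpos.le) hyBR.2 hRc)
        (Cube.diam_le hRpos.le)
    have h3 : T.s ≤ (2:ℝ)^(-(j:ℤ)) := hTs.le
    rw [Metric.mem_closedBall]
    calc dist z R.c ≤ dist z y + dist y R.c := dist_triangle _ _ _
      _ ≤ T.s * Real.sqrt n + R.s * Real.sqrt n := add_le_add h1 h2
      _ ≤ (2:ℝ)^(-(j:ℤ)) * Real.sqrt n * 2 := by rw [hRs]; nlinarith
  have hWvol : volume (Metric.closedBall R.c ((2:ℝ)^(-(j:ℤ)) * Real.sqrt n * 2)) ≠ ⊤ :=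
    (IsCompact.measure_lt_top (isCompact_closedBall _ _)).ne
  have h𝒯fin : 𝒯.Finite := by
    have hsub : 𝒯 ⊆ ⋃ m : Fin (n+1), ⋃ k ∈ Set.Icc ((j:ℤ)+1) ((j:ℤ)+a),
        {T | T ∈ 𝒜 m ∧ T.s = (2:ℝ)^(-k) ∧ T ∈ 𝒯} := by
      intro T hT
      have hT' := hT
      obtain ⟨⟨m, hTm⟩, hTs, hTG, hne⟩ := hT'
      obtain ⟨k, hk⟩ := (hfil m).1 T hTm
      refine Set.mem_iUnion.2 ⟨m, Set.mem_iUnion₂.2 ⟨k, ?_, ⟨hTm, hk, hT⟩⟩⟩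
      rw [Set.mem_Icc]
      constructor
      · have h1 : (2:ℝ)^(-k) < (2:ℝ)^(-(j:ℤ)) := hk ▸ hTs
        have := (zpow_lt_zpow_iff_right₀ (one_lt_two (α := ℝ))).mp h1
        omega
      · have h1 : (2:ℝ)^(-(j:ℤ)) ≤ (2:ℝ)^(a:ℤ) * (2:ℝ)^(-k) := by
          refine le_trans (hk ▸ hTG) ?_
          apply mul_le_mul_of_nonneg_right _ (zpow_pos (two_pos (α := ℝ)) _).le
          rw [zpow_natCast]; exact haG
        rw [← zpow_add₀ (two_ne_zero (α := ℝ))] at h1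
        have := (zpow_le_zpow_iff_right₀ (one_lt_two (α := ℝ))).mp h1
        omega
    refine Set.Finite.subset (Set.finite_iUnion fun m => ?_) hsub
    refine Set.Finite.biUnion (Set.finite_Icc _ _) fun k hk => ?_
    refine (cube_packing (zpow_pos two_pos (-k)) (fun T hT => hT.2.1) ?_
      (fun T hT => hWb T hT.2.2) hWvol).1
    exact fun T hT T' hT' hne =>
      filtration_disjoint (hfil m) hT.1 hT'.1 hT.2.1 hT'.2.1 hne
  have hμ𝒯 : ∀ T ∈ 𝒯, μ T.set ≠ ⊤ := by
    rintro T ⟨⟨m, hTm⟩, hTs, hTG, ⟨y, hyT, hyBR⟩⟩ htop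
    apply hBad y hyBR.1 m T hTm hyT hTs
    rw [htop, ENNReal.mul_top hβ'0]
    exact le_top
  set M : ENNReal := ∑ T ∈ h𝒯fin.toFinset, μ T.set with hMdef
  have hM : M ≠ ⊤ :=
    (ENNReal.sum_lt_top.mpr fun T hT =>
      lt_top_iff_ne_top.2 (hμ𝒯 T (h𝒯fin.mem_toFinset.mp hT))).ne
  -- key estimate
  have key : ∀ N : ℕ, μ (Bad ∩ R.set) ≤ β' * M * ρ'⁻¹ ^ N := by
    intro N
    set t := a * (N + 1) with htdef
    set l : ℤ := (j:ℤ) + t with hldef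
    have hjl : (2:ℝ)^(-(j:ℤ)) = 2 ^ t * (2:ℝ)^(-l) := by
      rw [← zpow_natCast (2:ℝ) t, ← zpow_add₀ (two_ne_zero (α := ℝ))]
      congr 1; omega
    set c : ENNReal := 2 ^ (t * n) * ρ' ^ N with hcdef
    set S : Cube n → Set (Cube n) := fun T => {Q | Q ∈ 𝒜 0 ∧ Q.s = (2:ℝ)^(-l) ∧
      Q.set ⊆ T.set ∧ c * μ Q.set ≤ β' * μ T.set} with hSdef
    have hSmem : ∀ T Q, Q ∈ S T ↔ (Q ∈ 𝒜 0 ∧ Q.s = (2:ℝ)^(-l) ∧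
        Q.set ⊆ T.set ∧ c * μ Q.set ≤ β' * μ T.set) := fun T Q => Iff.rfl
    -- coverage
    have hcov1 : Bad ∩ R.set ⊆ ⋃ T ∈ 𝒯, ⋃ Q ∈ S T, Q.set := by
      intro x hx
      obtain ⟨Q, ⟨hQ0, hQs, hQx⟩, -⟩ := (hfil 0).2.1 l x
      have ht1 : 1 ≤ t := by
        have : 1 ≤ a * (N + 1) := Nat.one_le_iff_ne_zero.2 (by positivity)
        omega
      obtain ⟨K, m', T, hK1, hT, hxT, hQT, hTj, hTG, hGK, hμK⟩ :=
        chain_lemma hn hα hG μ 𝒜 hfil hcov j x (hBad x hx.1) t l (by omega) (by omega)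
          0 Q hQ0 hQx hQs
      have hT𝒯 : T ∈ 𝒯 := ⟨⟨m', hT⟩, hTj, hTG, ⟨x, hxT, hx⟩⟩
      have hGKt : (2:ℝ) ^ t ≤ G ^ K := by
        rw [hQs, hjl] at hGK
        have hpos : (0:ℝ) < (2:ℝ)^(-l) := zpow_pos two_pos _
        exact le_of_mul_le_mul_right hGK hpos
      have hKN : N + 1 ≤ K := by
        have h1 : (2:ℝ) ^ t ≤ 2 ^ (a * K) := by
          refine le_trans hGKt ?_
          calc G ^ K ≤ ((2:ℝ) ^ a) ^ K := pow_le_pow_left₀ hG0.le haG K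
            _ = 2 ^ (a * K) := by rw [← pow_mul]
        have h2 : t ≤ a * K := (pow_le_pow_iff_right₀ (one_lt_two (α := ℝ))).mp h1
        rw [htdef] at h2
        exact Nat.le_of_mul_le_mul_left h2 (by omega)
      have hρ0 : (0:ℝ) < β / G ^ n := by positivity
      have hβK : c ≤ β' ^ K := by
        have hreal : (2:ℝ)^(t*n) * (β / G^n) ^ N ≤ β ^ K := by
          have hβeq : G ^ n * (β / G ^ n) = β := by field_simp
          calc (2:ℝ)^(t*n) * (β/G^n)^N = ((2:ℝ)^t)^n * (β/G^n)^N := by rw [pow_mul]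
            _ ≤ (G^K)^n * (β/G^n)^K := by
                apply mul_le_mul
                · exact pow_le_pow_left₀ (by positivity) hGKt n
                · exact pow_le_pow_right₀ hρ1.le (by omega)
                · positivity
                · positivity
            _ = (G^n * (β/G^n))^K := by ring
            _ = β ^ K := by rw [hβeq]
        calc c = ENNReal.ofReal ((2:ℝ)^(t*n) * (β/G^n)^N) := by
              rw [ENNReal.ofReal_mul (by positivity), ENNReal.ofReal_pow (by norm_num),
                ENNReal.ofReal_pow hρ0.le]
              norm_num
              rfl
          _ ≤ ENNReal.ofReal (β ^ K) := ENNReal.ofReal_le_ofReal hreal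
          _ = β' ^ K := ENNReal.ofReal_pow hβ0.le K
      have hQS : Q ∈ S T := (hSmem T Q).2 ⟨hQ0, hQs, hQT,
        le_trans (mul_le_mul_left hβK _) hμK⟩
      exact Set.mem_biUnion hT𝒯 (Set.mem_biUnion hQS hQx)
    -- counting
    have hSfin : ∀ T ∈ 𝒯, (S T).Finite ∧
        ∀ F : Finset (Cube n), ↑F ⊆ S T → (F.card : ENNReal) ≤ 2 ^ (t * n) := by
      intro T hT𝒯
      obtain ⟨-, hTs𝒯, -, -⟩ := hT𝒯
      have hpack := cube_packing (zpow_pos (two_pos (α := ℝ)) (-l))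
        (fun Q hQ => ((hSmem T Q).1 hQ).2.1)
        (fun Q hQ Q' hQ' hne => filtration_disjoint (hfil 0) ((hSmem T Q).1 hQ).1
          ((hSmem T Q').1 hQ').1 ((hSmem T Q).1 hQ).2.1 ((hSmem T Q').1 hQ').2.1 hne)
        (W := T.set) (fun Q hQ => ((hSmem T Q).1 hQ).2.2.1)
        (by rw [Cube.volume_set]; exact ENNReal.pow_ne_top ENNReal.ofReal_ne_top)
      refine ⟨hpack.1, fun F hF => ?_⟩
      have h1 := le_trans (hpack.2 F hF) (le_of_eq (Cube.volume_set T))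
      have h2 : ENNReal.ofReal T.s ^ n ≤ 2^(t*n) * ENNReal.ofReal ((2:ℝ)^(-l)) ^ n := by
        calc ENNReal.ofReal T.s ^ n ≤ ENNReal.ofReal ((2:ℝ)^(-(j:ℤ))) ^ n :=
              pow_le_pow_left₀ zero_le (ENNReal.ofReal_le_ofReal hTs𝒯.le) n
          _ = 2^(t*n) * ENNReal.ofReal ((2:ℝ)^(-l)) ^ n := by
              rw [hjl, ENNReal.ofReal_mul (by positivity), mul_pow]
              congr 1
              rw [ENNReal.ofReal_pow (by norm_num : (0:ℝ) ≤ 2), ← pow_mul]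
              norm_num
      have h3 := le_trans h1 h2
      have hv0 : (ENNReal.ofReal ((2:ℝ)^(-l)) ^ n) ≠ 0 :=
        pow_ne_zero _ (ENNReal.ofReal_pos.mpr (zpow_pos two_pos _)).ne'
      have hvtop : (ENNReal.ofReal ((2:ℝ)^(-l)) ^ n) ≠ ⊤ :=
        ENNReal.pow_ne_top ENNReal.ofReal_ne_top
      exact (ENNReal.mul_le_mul_iff_left hv0 hvtop).mp h3
    have hperT : ∀ T ∈ 𝒯, c * μ (⋃ Q ∈ S T, Q.set) ≤ 2^(t*n) * (β' * μ T.set) := by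
      intro T hT𝒯
      obtain ⟨hfin, hcard⟩ := hSfin T hT𝒯
      have hU : (⋃ Q ∈ S T, Cube.set Q) = ⋃ Q ∈ hfin.toFinset, Cube.set Q := by
        ext y; simp [Set.Finite.mem_toFinset]
      calc c * μ (⋃ Q ∈ S T, Cube.set Q)
          ≤ c * ∑ Q ∈ hfin.toFinset, μ Q.set := by
            rw [hU]; exact mul_le_mul_right (measure_biUnion_finset_le _ _) _
        _ = ∑ Q ∈ hfin.toFinset, c * μ Q.set := by rw [Finset.mul_sum]
        _ ≤ ∑ Q ∈ hfin.toFinset, β' * μ T.set :=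
            Finset.sum_le_sum fun Q hQ =>
              ((hSmem T Q).1 (hfin.mem_toFinset.mp hQ)).2.2.2
        _ = (hfin.toFinset.card : ENNReal) * (β' * μ T.set) := by
            rw [Finset.sum_const, nsmul_eq_mul]
        _ ≤ 2^(t*n) * (β' * μ T.set) :=
            mul_le_mul_left (hcard _ (le_of_eq hfin.coe_toFinset)) _
    have houter : c * μ (Bad ∩ R.set) ≤ 2^(t*n) * (β' * M) := by
      have hU2 : (⋃ T ∈ 𝒯, ⋃ Q ∈ S T, Cube.set Q)
          = ⋃ T ∈ h𝒯fin.toFinset, ⋃ Q ∈ S T, Cube.set Q := by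
        ext y; simp [Set.Finite.mem_toFinset]
      calc c * μ (Bad ∩ R.set)
          ≤ c * μ (⋃ T ∈ 𝒯, ⋃ Q ∈ S T, Cube.set Q) :=
            mul_le_mul_right (measure_mono hcov1) _
        _ ≤ c * ∑ T ∈ h𝒯fin.toFinset, μ (⋃ Q ∈ S T, Cube.set Q) := by
            rw [hU2]; exact mul_le_mul_right (measure_biUnion_finset_le _ _) _
        _ = ∑ T ∈ h𝒯fin.toFinset, c * μ (⋃ Q ∈ S T, Cube.set Q) := by
            rw [Finset.mul_sum]
        _ ≤ ∑ T ∈ h𝒯fin.toFinset, 2^(t*n) * (β' * μ T.set) :=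
            Finset.sum_le_sum fun T hT => hperT T (h𝒯fin.mem_toFinset.mp hT)
        _ = 2^(t*n) * (β' * M) := by
            simp only [hMdef, Finset.mul_sum]
    have hc0 : c ≠ 0 := mul_ne_zero (by positivity) (pow_ne_zero _ hρ'0)
    have hctop : c ≠ ⊤ :=
      ENNReal.mul_ne_top (ENNReal.pow_ne_top (by norm_num)) (ENNReal.pow_ne_top hρ'top)
    rw [← ENNReal.mul_le_mul_iff_right hc0 hctop]
    refine le_trans houter (le_of_eq ?_)
    have hcancel : ρ' ^ N * ρ'⁻¹ ^ N = 1 := by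
      rw [← mul_pow, ENNReal.mul_inv_cancel hρ'0 hρ'top, one_pow]
    rw [hcdef]
    rw [show (2:ENNReal)^(t*n) * ρ'^N * (β' * M * ρ'⁻¹^N)
      = (ρ'^N * ρ'⁻¹^N) * ((2:ENNReal)^(t*n) * (β' * M)) from by ring, hcancel, one_mul]
  -- limit
  have hinv : ρ'⁻¹ < 1 := ENNReal.inv_lt_one.mpr hρ'1
  have htend : Filter.Tendsto (fun N : ℕ => β' * M * ρ'⁻¹ ^ N) Filter.atTop (nhds 0) := by
    have h1 := ENNReal.tendsto_pow_atTop_nhds_zero_of_lt_one hinv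
    have h2 := ENNReal.Tendsto.const_mul (a := β' * M) h1
      (Or.inr (ENNReal.mul_ne_top ENNReal.ofReal_ne_top hM))
    simpa [mul_assoc] using h2
  have hfin := ge_of_tendsto' htend key
  exact le_antisymm hfin zero_le

/-- Lemma 1(i): for a Borel measure `μ` on `ℝⁿ`, `α > 1` and `β > (c_n α)^n`,
`μ`-almost every point lies in `(α,β)`-doubling cubes of the family `𝒜` of
Theorem A of arbitrarily small side length (`ℓ(Q_j) < 2^{-j}` for all `j`). -/
theorem stmt_10 (n : ℕ) (α β : ℝ) (hα : 1 < α) (hβ : (cN n * α) ^ n < β)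
    (μ : Measure (EuclideanSpace ℝ (Fin n)))
    (𝒜 : Fin (n + 1) → Set (Cube n))
    (hfil : ∀ m, IsDyadicFiltration (𝒜 m))
    (hcov : ∀ (x : EuclideanSpace ℝ (Fin n)) (r : ℝ), 0 < r →
      ∃ m, ∃ Q ∈ 𝒜 m, Metric.ball x r ⊆ Q.set ∧
        Metric.diam Q.set ≤ cN n * (2 * r)) :
    ∀ᵐ x ∂μ, ∀ j : ℕ,
      ∃ m, ∃ Q ∈ 𝒜 m, x ∈ Q.set ∧ Q.s < (2 : ℝ) ^ (-(j : ℤ)) ∧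
        μ (Q.dilate α).set ≤ ENNReal.ofReal β * μ Q.set := by
  rcases Nat.eq_zero_or_pos n with hn0 | hn
  · subst hn0
    refine ae_of_all μ fun x j => ?_
    obtain ⟨Q, ⟨hQF, hQs, hQx⟩, -⟩ := (hfil 0).2.1 ((j:ℤ)+1) x
    refine ⟨0, Q, hQF, hQx, ?_, ?_⟩
    · rw [hQs]; exact zpow_lt_zpow_right₀ one_lt_two (by omega)
    · have hset : (Q.dilate α).set = Q.set := by
        ext y; simp [Cube.set]
      rw [hset]
      have hβ1 : (1:ℝ) ≤ β := by
        have h := hβ; rw [pow_zero] at h; linarith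
      exact le_mul_of_one_le_left zero_le (ENNReal.one_le_ofReal.mpr hβ1)
  · have hsqn : (0:ℝ) < Real.sqrt n := Real.sqrt_pos.mpr (by exact_mod_cast hn)
    have hcN := cN_pos hn
    have hα0 : (0:ℝ) < α := by linarith
    have hc₀ : 0 < cN n * α := by positivity
    have hβ0 : 0 < β := lt_trans (by positivity) hβ
    obtain ⟨G, hGc, hGβ⟩ : ∃ G : ℝ, cN n * α < G ∧ G ^ n < β := by
      set c₀ := cN n * α with hc₀def
      set θ := β / c₀ ^ n with hθdef
      have hθ1 : 1 < θ := (one_lt_div (by positivity)).mpr hβ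
      have hθ0 : 0 < θ := by linarith
      refine ⟨c₀ * θ ^ (((n:ℝ)+1)⁻¹), ?_, ?_⟩
      · nth_rewrite 1 [← mul_one c₀]
        exact mul_lt_mul_of_pos_left
          ((Real.one_lt_rpow_iff_of_pos hθ0).mpr (Or.inl ⟨hθ1, by positivity⟩)) hc₀
      · rw [mul_pow, ← Real.rpow_natCast (θ ^ (((n:ℝ)+1)⁻¹)) n, ← Real.rpow_mul hθ0.le]
        have hlt : ((n:ℝ)+1)⁻¹ * n < 1 := by
          rw [inv_mul_lt_iff₀ (by positivity)]; nlinarith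
        have h2 : θ ^ ((((n:ℝ)+1)⁻¹) * (n:ℝ)) < θ ^ (1:ℝ) :=
          Real.rpow_lt_rpow_of_exponent_lt hθ1 hlt
        rw [Real.rpow_one] at h2
        calc c₀ ^ n * θ ^ ((((n:ℝ)+1)⁻¹) * (n:ℝ)) < c₀ ^ n * θ :=
              mul_lt_mul_of_pos_left h2 (by positivity)
          _ = β := by rw [hθdef]; field_simp
    have hG0 : (0:ℝ) < G := lt_trans hc₀ hGc
    have hρ1 : 1 < β / G ^ n := (one_lt_div (by positivity)).mpr hGβ
    obtain ⟨a₀, ha₀⟩ := pow_unbounded_of_one_lt (R := ℝ) G one_lt_two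
    have haG : G ≤ 2 ^ (a₀ + 1) :=
      le_trans ha₀.le (pow_le_pow_right₀ one_le_two (by omega))
    rw [ae_iff]
    have hsubBad : {x | ¬ ∀ j : ℕ, ∃ m, ∃ Q ∈ 𝒜 m, x ∈ Q.set ∧ Q.s < (2:ℝ)^(-(j:ℤ)) ∧
        μ (Q.dilate α).set ≤ ENNReal.ofReal β * μ Q.set} ⊆
        ⋃ j : ℕ, {x | ∀ m, ∀ Q ∈ 𝒜 m, x ∈ Q.set → Q.s < (2:ℝ)^(-(j:ℤ)) →
          ¬ (μ (Q.dilate α).set ≤ ENNReal.ofReal β * μ Q.set)} := by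
      intro x hx
      rw [Set.mem_setOf_eq] at hx
      push_neg at hx
      obtain ⟨j, hj⟩ := hx
      exact Set.mem_iUnion.2 ⟨j, fun m Q hQ hxQ hQs => (hj m Q hQ hxQ hQs).not_ge⟩
    refine measure_mono_null hsubBad (measure_iUnion_null fun j => ?_)
    obtain ⟨𝒬, h𝒬c, h𝒬sub, h𝒬cov⟩ := filtration_cover (hfil 0) (j:ℤ)
    set BadJ := {x : EuclideanSpace ℝ (Fin n) | ∀ m, ∀ Q ∈ 𝒜 m, x ∈ Q.set →
      Q.s < (2:ℝ)^(-(j:ℤ)) →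
      ¬ (μ (Q.dilate α).set ≤ ENNReal.ofReal β * μ Q.set)} with hBadJdef
    have h1 : BadJ ⊆ ⋃ R ∈ 𝒬, (BadJ ∩ Cube.set R) := by
      intro x hx
      have hx2 : x ∈ ⋃ Q ∈ 𝒬, Cube.set Q := h𝒬cov ▸ Set.mem_univ x
      obtain ⟨R, hR, hxR⟩ := Set.mem_iUnion₂.1 hx2
      exact Set.mem_iUnion₂.2 ⟨R, hR, hx, hxR⟩
    have h2 := le_trans (measure_mono h1)
      (measure_biUnion_le μ h𝒬c fun R => BadJ ∩ Cube.set R)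
    have h3 : ∀ R : 𝒬, μ (BadJ ∩ Cube.set ↑R) = 0 := by
      rintro ⟨R, hR⟩
      exact core_estimate hn hα hβ0 hGc hG0 hρ1 (by omega) haG μ 𝒜 hfil hcov j BadJ
        (fun x hx => hx) R (h𝒬sub R hR).2
    exact le_antisymm (h2.trans_eq (ENNReal.tsum_eq_zero.mpr h3)) zero_le
end
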